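/- arXiv:2012.03056 — 2 statements merged into one kernel-verified Lean document; each statement's English description precedes it below -/
import Mathlib

section
/- Let I be a nonzero ideal of the order 𝒪_f = ℤ + ℤfω in a quadratic field K = ℚ(√m). Then I⁻¹ = (1/N(I))·σ(I), where N(I) = [𝒪_f : I] is the norm of I and σ is the nontrivial automorphism of K. -/
open Submodule

theorem aux_natAbs_det_equiv {S : Type*} [CommRing S] [IsDomain S]
    [Module.Free ℤ S] [Module.Finite ℤ S]
    (I : Ideal S) {E : Type*} [EquivLike E S I] [AddEquivClass E S I] (e : E) :
    Int.natAbs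
        (LinearMap.det
          ((Submodule.subtype I).restrictScalars ℤ ∘ₗ AddMonoidHom.toIntLinearMap (e : S →+ I))) =
      Nat.card (S ⧸ I) := by
  by_cases hI : I = ⊥
  · subst hI
    have : (1 : S) ≠ 0 := one_ne_zero
    have : (1 : S) = 0 := EquivLike.injective e (Subsingleton.elim _ _)
    contradiction
  let ι := Module.Free.ChooseBasisIndex ℤ S
  let b := Module.Free.chooseBasis ℤ S
  cases isEmpty_or_nonempty ι
  · nontriviality S
    exact (not_nontrivial_iff_subsingleton.mpr
      (Function.Surjective.subsingleton b.repr.toEquiv.symm.surjective) (by infer_instance)).elim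
  haveI := Ideal.finiteQuotientOfFreeOfNeBot I hI
  letI := Classical.decEq ι
  let a := I.smithCoeffs b hI
  let b' := I.ringBasis b hI
  let ab := I.selfBasis b hI
  have ab_eq := I.selfBasis_def b hI
  let e' : S ≃ₗ[ℤ] I := b'.equiv ab (Equiv.refl _)
  let f : S →ₗ[ℤ] S := (I.subtype.restrictScalars ℤ).comp (e' : S →ₗ[ℤ] I)
  let f_apply : ∀ x, f x = b'.equiv ab (Equiv.refl _) x := fun x => rfl
  suffices (LinearMap.det f).natAbs = Nat.card (S ⧸ I) by
    calc
      _ = (LinearMap.det ((Submodule.subtype I).restrictScalars ℤ ∘ₗ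
            (AddEquiv.toIntLinearEquiv e : S ≃ₗ[ℤ] I))).natAbs := rfl
      _ = (LinearMap.det ((Submodule.subtype I).restrictScalars ℤ ∘ₗ _)).natAbs :=
            Int.natAbs_eq_iff_associated.mpr (LinearMap.associated_det_comp_equiv _ _ _)
      _ = Nat.card (S ⧸ I) := this
  have ha : ∀ i, f (b' i) = a i • b' i := by
    intro i; rw [f_apply, b'.equiv_apply, Equiv.refl_apply, ab_eq]
  letI := Classical.decEq ι
  calc
    Int.natAbs (LinearMap.det f) = Int.natAbs (LinearMap.toMatrix b' b' f).det := by
      rw [LinearMap.det_toMatrix]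
    _ = Int.natAbs (Matrix.diagonal a).det := ?_
    _ = Int.natAbs (∏ i, a i) := by rw [Matrix.det_diagonal]
    _ = ∏ i, Int.natAbs (a i) := map_prod Int.natAbsHom a Finset.univ
    _ = Nat.card (S ⧸ I) := ?_
  · congr 2; ext i j
    rw [LinearMap.toMatrix_apply, ha, LinearEquiv.map_smul, Module.Basis.repr_self, Finsupp.smul_single,
      smul_eq_mul, mul_one]
    by_cases h : i = j
    · rw [h, Matrix.diagonal_apply_eq, Finsupp.single_eq_same]
    · rw [Matrix.diagonal_apply_ne _ h, Finsupp.single_eq_of_ne h]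
  haveI : ∀ i, NeZero (a i).natAbs := fun i =>
    ⟨Int.natAbs_ne_zero.mpr (Ideal.smithCoeffs_ne_zero b I hI i)⟩
  simp_rw [Nat.card_congr (Ideal.quotientEquivPiZMod I b hI).toEquiv, Nat.card_pi,
    Nat.card_zmod]
  rfl

theorem aux_card_det {S : Type*} [CommRing S] [IsDomain S] {ι : Type*} [Fintype ι] [DecidableEq ι]
    (b : Module.Basis ι ℤ S) (I : Ideal S) (bI : Module.Basis ι ℤ I) :
    Nat.card (S ⧸ I) = (b.det ((↑) ∘ bI)).natAbs := by
  haveI : Module.Free ℤ S := Module.Free.of_basis b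
  haveI : Module.Finite ℤ S := Module.Finite.of_basis b
  let e := b.equiv bI (Equiv.refl _)
  symm
  calc
    (b.det ((Submodule.subtype I).restrictScalars ℤ ∘ bI)).natAbs =
        (LinearMap.det ((Submodule.subtype I).restrictScalars ℤ ∘ₗ (e : S →ₗ[ℤ] I))).natAbs := by
      rw [Module.Basis.det_comp_basis]
    _ = _ := aux_natAbs_det_equiv I e

/-- Let `K = ℚ(√m)` (`m` squarefree, `m ≠ 1`), `ω = √m` or `(1+√m)/2`
according as `m ≢ 1` or `m ≡ 1 (mod 4)`, and let `O = 𝒪_f = ℤ + ℤfω` be the order of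
conductor `f`.  For every nonzero ideal `I` of `O`,
`I⁻¹ = (1/N(I)) · σ(I)` where `N(I) = [O : I]` and `σ` is the nontrivial automorphism. -/
theorem order_ideal_inv_eq (m : ℤ) (hm : Squarefree m) (hm1 : m ≠ 1)
    (K : Type*) [Field K] [Algebra ℚ K] (sqm : K) (hsqm : sqm ^ 2 = (m : K))
    (hbasis : ∀ x : K, ∃! c : ℚ × ℚ,
      x = algebraMap ℚ K c.1 + algebraMap ℚ K c.2 * sqm)
    (ω : K) (hω : ω = if m % 4 = 1 then (1 + sqm) / 2 else sqm)
    (f : ℕ) (hf : 0 < f)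
    (O : Subring K) (hO : ∀ x : K, x ∈ O ↔ ∃ a b : ℤ, x = a + b * ((f : K) * ω))
    (σ : K →+* K) (hσ : σ sqm = -sqm)
    (I : Ideal O) (hI : I ≠ ⊥) :
    ∀ x : K, (∀ y : O, y ∈ I → x * (y : K) ∈ O) ↔
      ∃ y : O, y ∈ I ∧ x = σ (y : K) / (Nat.card (O ⧸ I) : K) := by
  haveI : CharZero K := charZero_of_injective_algebraMap (algebraMap ℚ K).injective
  have ratK : ∀ q : ℚ, algebraMap ℚ K q = (q : K) := fun q => eq_ratCast _ q
  have hzero : ∀ p q : ℚ, (p : K) + (q : K) * sqm = 0 → p = 0 ∧ q = 0 := by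
    intro p q h
    obtain ⟨c, -, hc⟩ := hbasis 0
    have h1 := hc (p, q) (show (0 : K) = _ by rw [ratK, ratK]; exact h.symm)
    have h2 := hc (0, 0) (show (0 : K) = _ by norm_num [ratK])
    have h3 : (p, q) = ((0 : ℚ), (0 : ℚ)) := h1.trans h2.symm
    exact ⟨congrArg Prod.fst h3, congrArg Prod.snd h3⟩
  set θ : K := (f : K) * ω with hθdef
  obtain ⟨u, v, t, n, hv, hθuv, hθ2, htu⟩ :
      ∃ (u v : ℚ) (t n : ℤ), v ≠ 0 ∧ θ = (u : K) + (v : K) * sqm ∧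
        θ ^ 2 = (n : K) + (t : K) * θ ∧ (t : ℚ) = 2 * u := by
    by_cases h4 : m % 4 = 1
    · obtain ⟨k, hk⟩ : ∃ k : ℤ, m = 4 * k + 1 := ⟨m / 4, by omega⟩
      have hmK : (m : K) = 4 * (k : K) + 1 := by exact_mod_cast congrArg (Int.cast : ℤ → K) hk
      refine ⟨(f : ℚ) / 2, (f : ℚ) / 2, (f : ℤ), (f : ℤ) ^ 2 * k,
        div_ne_zero (Nat.cast_ne_zero.mpr hf.ne') two_ne_zero, ?_, ?_, by push_cast; ring⟩
      · rw [hθdef, hω, if_pos h4]; push_cast; ring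
      · rw [hθdef, hω, if_pos h4]; push_cast
        linear_combination ((f : K) ^ 2 / 4) * hsqm + ((f : K) ^ 2 / 4) * hmK
    · refine ⟨0, (f : ℚ), 0, (f : ℤ) ^ 2 * m, Nat.cast_ne_zero.mpr hf.ne', ?_, ?_,
        by push_cast; ring⟩
      · rw [hθdef, hω, if_neg h4]; push_cast; ring
      · rw [hθdef, hω, if_neg h4]; push_cast
        linear_combination (f : K) ^ 2 * hsqm
  clear_value θ
  have hzeroθ : ∀ p q : ℚ, (p : K) + (q : K) * θ = 0 → p = 0 ∧ q = 0 := by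
    intro p q h
    have h' : ((p + q * u : ℚ) : K) + ((q * v : ℚ) : K) * sqm = 0 := by
      push_cast
      rw [hθuv] at h
      linear_combination h
    obtain ⟨h1, h2⟩ := hzero _ _ h'
    have hq : q = 0 := by
      rcases mul_eq_zero.mp h2 with h | h
      · exact h
      · exact absurd h hv
    subst hq
    simp at h1
    exact ⟨h1, rfl⟩
  have huniqθQ : ∀ p q p' q' : ℚ, (p : K) + (q : K) * θ = (p' : K) + (q' : K) * θ →
      p = p' ∧ q = q' := by
    intro p q p' q' h
    have := hzeroθ (p - p') (q - q') (by push_cast; linear_combination h)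
    exact ⟨by linarith [this.1], by linarith [this.2]⟩
  have huniqθZ : ∀ a b a' b' : ℤ, (a : K) + (b : K) * θ = (a' : K) + (b' : K) * θ →
      a = a' ∧ b = b' := by
    intro a b a' b' h
    have := huniqθQ a b a' b' (by push_cast; exact_mod_cast h)
    exact ⟨by exact_mod_cast this.1, by exact_mod_cast this.2⟩
  have hvK : (v : K) ≠ 0 := by exact_mod_cast hv
  have hrep : ∀ z : K, ∃ p q : ℚ, z = (p : K) + (q : K) * θ := by
    intro z
    obtain ⟨⟨c1, c2⟩, hc, -⟩ := hbasis z
    rw [ratK, ratK] at hc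
    simp only at hc
    refine ⟨c1 - c2 * u / v, c2 / v, ?_⟩
    rw [hθuv, hc]
    push_cast
    field_simp
    ring
  have hσq : ∀ q : ℚ, σ (q : K) = (q : K) := fun q => map_ratCast σ q
  have hσθ : σ θ = (t : K) - θ := by
    rw [hθuv, map_add, map_mul]
    have h1 : σ ((u : ℚ) : K) = (u : K) := hσq u
    have h2 : σ ((v : ℚ) : K) = (v : K) := hσq v
    rw [h1, h2, hσ]
    have htuK : (t : K) = 2 * (u : K) := by exact_mod_cast congrArg (fun q : ℚ => (q : K)) htu
    rw [htuK]; ring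
  have hσσ : ∀ z : K, σ (σ z) = z := by
    intro z
    obtain ⟨p, q, rfl⟩ := hrep z
    simp only [map_add, map_mul, map_sub, hσq, hσθ, map_intCast]
    all_goals ring
  -- basis of O
  have h1mem : (1 : K) ∈ O := (hO 1).2 ⟨1, 0, by push_cast; ring⟩
  have hθmem : θ ∈ O := (hO θ).2 ⟨0, 1, by push_cast; ring⟩
  set o1 : O := ⟨1, h1mem⟩ with ho1
  set oθ : O := ⟨θ, hθmem⟩ with hoθ
  have hcoe_smul : ∀ (k : ℤ) (z : O), ((k • z : O) : K) = (k : K) * (z : K) := by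
    intro k z
    rw [zsmul_eq_mul]
    push_cast
    ring
  have ho1coe : ((o1 : O) : K) = 1 := rfl
  have hoθcoe : ((oθ : O) : K) = θ := rfl
  have hcoe2 : ∀ (s w : ℤ) (y z : O), ((s • y + w • z : O) : K) = (s : K) * (y : K) + (w : K) * (z : K) := by
    intro s w y z
    push_cast [hcoe_smul]
    ring
  have hcoe2' : ∀ (s w : ℤ) (y z : O), ((s • y - w • z : O) : K) = (s : K) * (y : K) - (w : K) * (z : K) := by
    intro s w y z
    push_cast [hcoe_smul]
    ring
  have hli : LinearIndependent ℤ ![o1, oθ] := by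
    rw [LinearIndependent.pair_iff]
    intro s w h
    have hK : ((s : ℤ) : K) + ((w : ℤ) : K) * θ = 0 := by
      have h' := congrArg (fun z : O => (z : K)) h
      rw [hcoe2, ho1coe, hoθcoe] at h'
      simpa using h'
    have hK' : ((s : ℚ) : K) + ((w : ℚ) : K) * θ = 0 := by push_cast; exact_mod_cast hK
    have := hzeroθ _ _ hK'
    exact ⟨by exact_mod_cast this.1, by exact_mod_cast this.2⟩
  have hsp : ⊤ ≤ Submodule.span ℤ (Set.range ![o1, oθ]) := by
    rintro z -
    obtain ⟨a, b, hab⟩ := (hO (z : K)).1 z.2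
    have hz : z = a • o1 + b • oθ := by
      apply Subtype.ext
      rw [show ((a • o1 + b • oθ : O) : K) = _ from hcoe2 a b o1 oθ, ho1coe, hoθcoe, hab]
      ring
    have hrange : Set.range ![o1, oθ] = {o1, oθ} := by
      ext w
      simp [Matrix.range_cons, Matrix.range_empty, or_comm]
    rw [hz, hrange]
    exact Submodule.add_mem _
      (Submodule.smul_mem _ _ (Submodule.subset_span (by simp)))
      (Submodule.smul_mem _ _ (Submodule.subset_span (by simp)))
  let bO : Module.Basis (Fin 2) ℤ O := Module.Basis.mk hli hsp
  have hbO0 : bO 0 = o1 := by simp [bO, Module.Basis.mk_apply]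
  have hbO1 : bO 1 = oθ := by simp [bO, Module.Basis.mk_apply]
  let bI : Module.Basis (Fin 2) ℤ I := Ideal.selfBasis bO I hI
  set α : K := ((bI 0 : O) : K) with hαdef
  set β : K := ((bI 1 : O) : K) with hβdef
  have hαI : ((bI 0 : O)) ∈ I := (bI 0).2
  have hβI : ((bI 1 : O)) ∈ I := (bI 1).2
  obtain ⟨a, b, hα⟩ := (hO α).1 (bI 0 : O).2
  obtain ⟨c, d, hβ⟩ := (hO β).1 (bI 1 : O).2
  set D : ℤ := a * d - c * b with hDdef
  have hrepr : ∀ (z : O) (a' b' : ℤ), (z : K) = (a' : K) + (b' : K) * θ →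
      bO.repr z 0 = a' ∧ bO.repr z 1 = b' := by
    intro z a' b' hz
    have hz' : z = a' • o1 + b' • oθ := by
      apply Subtype.ext
      rw [show ((a' • o1 + b' • oθ : O) : K) = _ from hcoe2 a' b' o1 oθ, ho1coe, hoθcoe, hz]
      ring
    rw [hz', ← hbO0, ← hbO1, map_add, map_smul, map_smul, bO.repr_self, bO.repr_self]
    simp [Finsupp.single_apply]
  have hdet : bO.det ((↑) ∘ bI) = D := by
    rw [Module.Basis.det_apply, Matrix.det_fin_two]
    have h0 := hrepr (bI 0) a b hα
    have h1 := hrepr (bI 1) c d hβ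
    simp only [Module.Basis.toMatrix_apply, Function.comp_apply]
    rw [h0.1, h0.2, h1.1, h1.2, hDdef]
  set N := Nat.card (O ⧸ I) with hNdef
  have hND : N = D.natAbs := by rw [hNdef, aux_card_det bO I bI, hdet]
  haveI : Module.Free ℤ O := Module.Free.of_basis bO
  haveI : Module.Finite ℤ O := Module.Finite.of_basis bO
  have hNpos : 0 < N := by
    haveI := I.finiteQuotientOfFreeOfNeBot hI
    rw [hNdef]
    exact Nat.card_pos
  have hNK : (N : K) ≠ 0 := Nat.cast_ne_zero.mpr hNpos.ne'
  clear_value N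
  have memI : ∀ z : O, z ∈ I → ∃ s w : ℤ, (z : K) = (s : K) * α + (w : K) * β := by
    intro z hz
    have hsum : (⟨z, hz⟩ : I) = (bI.repr ⟨z, hz⟩ 0) • bI 0 + (bI.repr ⟨z, hz⟩ 1) • bI 1 := by
      have h := bI.sum_repr ⟨z, hz⟩
      rw [Fin.sum_univ_two] at h
      exact h.symm
    refine ⟨bI.repr ⟨z, hz⟩ 0, bI.repr ⟨z, hz⟩ 1, ?_⟩
    have h := congrArg (fun w : I => ((w : O) : K)) hsum
    simp only at h
    rw [show (((⟨z, hz⟩ : I) : O) : K) = (z : K) from rfl] at h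
    rw [h, show ((((bI.repr ⟨z, hz⟩ 0) • bI 0 + (bI.repr ⟨z, hz⟩ 1) • bI 1 : I) : O) : K)
      = (((bI.repr ⟨z, hz⟩ 0) • (bI 0 : O) + (bI.repr ⟨z, hz⟩ 1) • (bI 1 : O) : O) : K) from rfl,
      hcoe2]
  have memI' : ∀ (s w : ℤ) (z : O), (z : K) = (s : K) * α + (w : K) * β → z ∈ I := by
    intro s w z hz
    have : z = s • (bI 0 : O) + w • (bI 1 : O) := by
      apply Subtype.ext
      rw [show ((s • (bI 0 : O) + w • (bI 1 : O) : O) : K) = _ from hcoe2 s w _ _]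
      exact hz
    rw [this, zsmul_eq_mul, zsmul_eq_mul]
    exact I.add_mem (I.mul_mem_left _ hαI) (I.mul_mem_left _ hβI)
  intro x
  constructor
  · -- hard direction: I⁻¹ ⊆ σ(I)/N
    intro hx
    obtain ⟨p, q, hxpq⟩ := hrep x
    obtain ⟨e1, e2, hg⟩ := (hO _).1 (hx (bI 0 : O) hαI)
    obtain ⟨e3, e4, hh⟩ := (hO _).1 (hx (bI 1 : O) hβI)
    have hcoords1 : (e1 : ℚ) = p * a + q * b * n ∧ (e2 : ℚ) = p * b + q * a + q * b * t := by
      have hid : x * α = ((p * a + q * b * n : ℚ) : K) + ((p * b + q * a + q * b * t : ℚ) : K) * θ := by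
        rw [hxpq, hα]
        push_cast
        linear_combination ((q : K) * (b : K)) * hθ2
      have h' := huniqθQ (p * a + q * b * n) (p * b + q * a + q * b * t) e1 e2
        (by rw [← hid, hg]; push_cast; ring)
      exact ⟨h'.1.symm, h'.2.symm⟩
    have hcoords2 : (e3 : ℚ) = p * c + q * d * n ∧ (e4 : ℚ) = p * d + q * c + q * d * t := by
      have hid : x * β = ((p * c + q * d * n : ℚ) : K) + ((p * d + q * c + q * d * t : ℚ) : K) * θ := by
        rw [hxpq, hβ]
        push_cast
        linear_combination ((q : K) * (d : K)) * hθ2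
      have h' := huniqθQ _ _ e3 e4 (by rw [← hid, hh]; push_cast; ring)
      exact ⟨h'.1.symm, h'.2.symm⟩
    have he2 : (e2 : K) = (p : K) * b + q * a + q * b * t := by
      exact_mod_cast congrArg (fun r : ℚ => (r : K)) hcoords1.2
    have he4 : (e4 : K) = (p : K) * d + q * c + q * d * t := by
      exact_mod_cast congrArg (fun r : ℚ => (r : K)) hcoords2.2
    have hσx : σ x = (p : K) + (q : K) * ((t : K) - θ) := by
      rw [hxpq, map_add, map_mul, hσq, hσq, hσθ]
    have hDσx : (D : K) * σ x = (e4 : K) * α - (e2 : K) * β := by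
      rw [hσx, hα, hβ, hDdef]
      push_cast at he2 he4 ⊢
      linear_combination (-( (a : K) + (b : K) * θ)) * he4 + ((c : K) + (d : K) * θ) * he2
    rcases (show (N : ℤ) = D ∨ (N : ℤ) = -D by omega) with hDN | hDN
    · refine ⟨e4 • (bI 0 : O) - e2 • (bI 1 : O), ?_, ?_⟩
      · rw [zsmul_eq_mul, zsmul_eq_mul]
        exact I.sub_mem (I.mul_mem_left _ hαI) (I.mul_mem_left _ hβI)
      · have hyK : ((e4 • (bI 0 : O) - e2 • (bI 1 : O) : O) : K) = (e4 : K) * α - (e2 : K) * β :=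
          hcoe2' e4 e2 _ _
        have hDK : (D : K) = (N : K) := by
          have h := congrArg (Int.cast : ℤ → K) hDN
          push_cast at h
          linear_combination -h
        rw [hyK, ← hDσx, hDK, map_mul, map_natCast, hσσ]
        field_simp
    · refine ⟨e2 • (bI 1 : O) - e4 • (bI 0 : O), ?_, ?_⟩
      · rw [zsmul_eq_mul, zsmul_eq_mul]
        exact I.sub_mem (I.mul_mem_left _ hβI) (I.mul_mem_left _ hαI)
      · have hyK : ((e2 • (bI 1 : O) - e4 • (bI 0 : O) : O) : K) = -((e4 : K) * α - (e2 : K) * β) := by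
          rw [hcoe2' e2 e4 _ _]
          ring
        have hDK : (D : K) = -(N : K) := by
          have h := congrArg (Int.cast : ℤ → K) hDN
          push_cast at h
          linear_combination h
        rw [hyK, ← hDσx, hDK]
        simp only [map_neg, map_mul, map_natCast, hσσ, neg_neg]
        field_simp
  · -- easy direction: σ(I)/N ⊆ I⁻¹
    rintro ⟨y, hyI, rfl⟩ z hzI
    obtain ⟨s1, s2, hy⟩ := memI y hyI
    obtain ⟨w1, w2, hz⟩ := memI z hzI
    obtain ⟨w1', w2', hz'⟩ := memI (oθ * z) (I.mul_mem_left _ hzI)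
    have hyθ : (y : K) = ((s1 * a + s2 * c : ℤ) : K) + ((s1 * b + s2 * d : ℤ) : K) * θ := by
      rw [hy, hα, hβ]; push_cast; ring
    have hzθ : (z : K) = ((w1 * a + w2 * c : ℤ) : K) + ((w1 * b + w2 * d : ℤ) : K) * θ := by
      rw [hz, hα, hβ]; push_cast; ring
    have hzθ' : ((oθ * z : O) : K) = ((w1' * a + w2' * c : ℤ) : K) + ((w1' * b + w2' * d : ℤ) : K) * θ := by
      rw [hz', hα, hβ]; push_cast; ring
    have hcoeθz : ((oθ * z : O) : K) = θ * (z : K) := by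
      push_cast
      rfl
    have hθzexp : θ * (z : K) =
        (((w1 * b + w2 * d) * n : ℤ) : K) + (((w1 * a + w2 * c) + (w1 * b + w2 * d) * t : ℤ) : K) * θ := by
      rw [hzθ]
      push_cast
      linear_combination (((w1 : K) * b + w2 * d)) * hθ2
    have hAB : ((w1' * a + w2' * c : ℤ) : K) + ((w1' * b + w2' * d : ℤ) : K) * θ
        = (((w1 * b + w2 * d) * n : ℤ) : K) + (((w1 * a + w2 * c) + (w1 * b + w2 * d) * t : ℤ) : K) * θ := by
      rw [← hzθ', hcoeθz, hθzexp]
    obtain ⟨hA, hB⟩ := huniqθZ _ _ _ _ hAB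
    -- hA : w1'*a + w2'*c = (w1*b + w2*d)*n ; hB : w1'*b + w2'*d = (w1*a + w2*c) + (w1*b + w2*d)*t
    have hA' : ((w1' : K) * a + w2' * c) = ((w1 : K) * b + w2 * d) * n := by
      exact_mod_cast hA
    have hB' : ((w1' : K) * b + w2' * d) = ((w1 : K) * a + w2 * c) + ((w1 : K) * b + w2 * d) * t := by
      exact_mod_cast hB
    set U0 : ℤ := (s1 * w2' - s2 * w1') - t * (s1 * w2 - s2 * w1) with hU0
    set V0 : ℤ := s1 * w2 - s2 * w1 with hV0
    have hσy : σ (y : K) = ((s1 * a + s2 * c : ℤ) : K) + ((s1 * b + s2 * d : ℤ) : K) * ((t : K) - θ) := by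
      rw [hyθ, map_add, map_mul, map_intCast, map_intCast, hσθ]
    have key : σ (y : K) * (z : K) = ((D * U0 : ℤ) : K) + ((D * V0 : ℤ) : K) * θ := by
      rw [hσy, hzθ, hU0, hV0, hDdef]
      push_cast
      linear_combination (-((s1 : K) * b + s2 * d) * ((w1 : K) * b + w2 * d)) * hθ2
        + (-((s1 : K) * a + s2 * c)) * hB' + ((s1 : K) * b + s2 * d) * hA'
    rw [hO]
    rcases (show (N : ℤ) = D ∨ (N : ℤ) = -D by omega) with hDN | hDN
    · refine ⟨U0, V0, ?_⟩
      have hDK : (D : K) = (N : K) := by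
        have h := congrArg (Int.cast : ℤ → K) hDN
        push_cast at h
        linear_combination -h
      rw [div_mul_eq_mul_div, key]
      push_cast
      rw [hDK]
      field_simp
    · refine ⟨-U0, -V0, ?_⟩
      have hDK : (D : K) = -(N : K) := by
        have h := congrArg (Int.cast : ℤ → K) hDN
        push_cast at h
        linear_combination h
      rw [div_mul_eq_mul_div, key]
      push_cast
      rw [hDK]
      field_simp
end

section
/- Let K be a field, n ≥ 3 an odd integer, and R = K[x², xⁿ] ⊆ K[x]. Let I be a nonzero ideal of R and let f be the smallest positive odd integer with x^f I ⊆ I. Then the multiplier ring ϱ(I) = {g ∈ K(x) : gI ⊆ I} equals K[x²] + K[x]x^{f−1}, and Fitt₁(I) = (R : ϱ(I)) = K[x²]x^{n−f} + K[x]x^{n−1}. Moreover R/Fitt₁(I) is isomorphic as a ring to K[x²]/(x^{n−f}). -/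
/-- The second Fitting ideal of a two-generated ideal, computed from the generating pair
`(a, b)`: the ideal generated by all coefficients involved in a relation
`r * a + s * b = 0`. -/
def relFittingIdeal {R : Type*} [CommRing R] (a b : R) : Ideal R :=
  Ideal.span {r : R | (∃ s, r * a + s * b = 0) ∨ (∃ s, s * a + r * b = 0)}

namespace CuspAux
open Polynomial

variable {K : Type*} [Field K]

/-- Membership pattern for `R = K[x²,xⁿ]`: all odd coefficients below `n` vanish. -/
def MR (n : ℕ) (p : K[X]) : Prop := ∀ j, Odd j → j < n → p.coeff j = 0

/-- Even polynomial: all odd coefficients vanish. -/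
def Ev (p : K[X]) : Prop := ∀ j, Odd j → p.coeff j = 0

lemma Ev.mr {p : K[X]} (h : Ev p) (n : ℕ) : MR n p := fun j hj _ => h j hj

lemma MR.add {n : ℕ} {p q : K[X]} (hp : MR n p) (hq : MR n q) : MR n (p + q) := by
  intro j hj hjn; simp [coeff_add, hp j hj hjn, hq j hj hjn]

lemma MR.neg {n : ℕ} {p : K[X]} (hp : MR n p) : MR n (-p) := by
  intro j hj hjn; simp [hp j hj hjn]

lemma MR.sub {n : ℕ} {p q : K[X]} (hp : MR n p) (hq : MR n q) : MR n (p - q) := by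
  intro j hj hjn; simp [coeff_sub, hp j hj hjn, hq j hj hjn]

lemma Ev.add {p q : K[X]} (hp : Ev p) (hq : Ev q) : Ev (p + q) := by
  intro j hj; simp [coeff_add, hp j hj, hq j hj]

lemma Ev.sub {p q : K[X]} (hp : Ev p) (hq : Ev q) : Ev (p - q) := by
  intro j hj; simp [coeff_sub, hp j hj, hq j hj]

lemma Ev.one : Ev (1 : K[X]) := by
  intro j hj
  rw [coeff_one, if_neg]
  rintro rfl
  simp [Nat.odd_iff] at hj

/-- Parity convolution: if both factors have no odd coefficients up to an odd `j`,
the product has zero `j`-th coefficient. -/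
lemma odd_conv {p q : K[X]} {j : ℕ} (hj : Odd j)
    (hp : ∀ i, Odd i → i ≤ j → p.coeff i = 0)
    (hq : ∀ i, Odd i → i ≤ j → q.coeff i = 0) : (p * q).coeff j = 0 := by
  rw [coeff_mul]
  apply Finset.sum_eq_zero
  rintro ⟨i, k⟩ hik
  rw [Finset.HasAntidiagonal.mem_antidiagonal] at hik
  have : Odd i ∨ Odd k := by
    rcases Nat.even_or_odd i with hi | hi
    · right
      rcases Nat.even_or_odd k with hk | hk
      · exfalso; rw [← hik] at hj
        rw [Nat.odd_iff, Nat.even_iff] at *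
        omega
      · exact hk
    · left; exact hi
  rcases this with hi | hk
  · simp [hp i hi (by omega)]
  · simp [hq k hk (by omega)]

lemma Ev.mul {p q : K[X]} (hp : Ev p) (hq : Ev q) : Ev (p * q) := by
  intro j hj
  exact odd_conv hj (fun i hi _ => hp i hi) (fun i hi _ => hq i hi)

lemma MR.mul {n : ℕ} {p q : K[X]} (hp : MR n p) (hq : MR n q) : MR n (p * q) := by
  intro j hj hjn
  exact odd_conv hj (fun i hi hij => hp i hi (lt_of_le_of_lt hij hjn))
    (fun i hi hij => hq i hi (lt_of_le_of_lt hij hjn))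

lemma Ev.expand (q : K[X]) : Ev (Polynomial.expand K 2 q) := by
  intro j hj
  rw [coeff_expand (by norm_num)]
  rw [if_neg]
  rintro ⟨m, rfl⟩
  rw [Nat.odd_iff] at hj
  omega

lemma coeff_expand_two (q : K[X]) (k : ℕ) :
    (Polynomial.expand K 2 q).coeff (2 * k) = q.coeff k := by
  rw [coeff_expand (by norm_num), if_pos ⟨k, rfl⟩]
  congr 1
  omega

lemma Ev.expand_contract {p : K[X]} (h : Ev p) :
    Polynomial.expand K 2 (Polynomial.contract 2 p) = p := by
  ext j
  rcases Nat.even_or_odd j with ⟨k, hk⟩ | hj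
  · have : j = 2 * k := by omega
    subst this
    rw [coeff_expand_two, coeff_contract (by norm_num)]
    congr 1
    omega
  · rw [(Ev.expand _) j hj, h j hj]

lemma Ev.comp_X_sq {p : K[X]} (h : Ev p) : ∃ q : K[X], p = q.comp (X ^ 2) := by
  exact ⟨Polynomial.contract 2 p, by rw [← expand_eq_comp_X_pow, h.expand_contract]⟩

lemma Ev.X_pow {k : ℕ} (h : Even k) : Ev (X ^ k : K[X]) := by
  intro j hj
  rw [coeff_X_pow, if_neg]
  rintro rfl
  exact (Nat.not_even_iff_odd.mpr hj) h

lemma ev_comp_X_sq (q : K[X]) : Ev (q.comp (X ^ 2)) := by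
  rw [← expand_eq_comp_X_pow]; exact Ev.expand q

lemma MR_X_pow {n k : ℕ} (h : Even k ∨ n ≤ k) : MR n (X ^ k : K[X]) := by
  intro j hj hjn
  rw [coeff_X_pow, if_neg]
  rintro rfl
  rcases h with h | h
  · exact (Nat.not_even_iff_odd.mpr hj) h
  · omega

/-- low coefficients of `X^k * p` vanish. -/
lemma coeff_X_pow_mul_lt {k j : ℕ} {p : K[X]} (h : j < k) : (X ^ k * p).coeff j = 0 := by
  rw [coeff_mul]
  apply Finset.sum_eq_zero
  rintro ⟨i, l⟩ hil
  rw [Finset.HasAntidiagonal.mem_antidiagonal] at hil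
  rw [coeff_X_pow, if_neg (by omega)]
  ring

end CuspAux

namespace CuspAux
open Polynomial
variable {K : Type*} [Field K]

lemma MR_X_pow_mul {n k : ℕ} {p : K[X]} (hk : Even k) (h : n ≤ k + 1) : MR n (X ^ k * p) :=
  fun j hj hjn =>
  coeff_X_pow_mul_lt (by rcases hj with ⟨m, rfl⟩; rcases hk with ⟨l, rfl⟩; omega)

end CuspAux

namespace CuspAux
open Polynomial
variable {K : Type*} [Field K]

lemma coeff_eq_of_dvd_sub {N : ℕ} {p q : K[X]} (h : X ^ N ∣ p - q) {j : ℕ} (hj : j < N) :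
    p.coeff j = q.coeff j := by
  obtain ⟨h', hh⟩ := h
  have := congrArg (fun r => Polynomial.coeff r j) hh
  simp only [coeff_sub] at this
  rw [Polynomial.coeff_mul] at this
  have hz : ∑ x ∈ Finset.HasAntidiagonal.antidiagonal j, (X ^ N : K[X]).coeff x.1 * h'.coeff x.2 = 0 := by
    apply Finset.sum_eq_zero
    rintro ⟨i, l⟩ hil
    rw [Finset.HasAntidiagonal.mem_antidiagonal] at hil
    rw [coeff_X_pow, if_neg (by omega)]
    ring
  rw [hz] at this
  exact sub_eq_zero.mp this

/-- Geometric-series style inverse modulo `X^N`. -/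
lemma exists_inv_mod {p : K[X]} (h0 : p.coeff 0 ≠ 0) (N : ℕ) : ∃ w, X ^ N ∣ p * w - 1 := by
  induction N with
  | zero => exact ⟨0, by simp⟩
  | succ N ih =>
    obtain ⟨w, h', hh⟩ := ih
    refine ⟨w - Polynomial.C ((h'.coeff 0) / p.coeff 0) * X ^ N, ?_⟩
    have : p * (w - Polynomial.C ((h'.coeff 0) / p.coeff 0) * X ^ N) - 1
        = X ^ N * (h' - p * Polynomial.C ((h'.coeff 0) / p.coeff 0)) := by
      linear_combination hh
    rw [this, pow_succ]
    apply mul_dvd_mul_left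
    rw [Polynomial.X_dvd_iff]
    simp only [coeff_sub, Polynomial.coeff_mul_C]
    field_simp
    ring
end CuspAux

namespace CuspAux
open Polynomial
variable {K : Type*} [Field K]

/-- `R = K[x²,xⁿ]` membership characterization. -/
lemma mem_adjoin_iff {n : ℕ} (hodd : Odd n) (p : K[X]) :
    p ∈ Algebra.adjoin K {(X : K[X]) ^ 2, X ^ n} ↔ MR n p := by
  constructor
  · intro hp
    let S : Subalgebra K K[X] :=
      { carrier := {q | MR n q}
        mul_mem' := fun hq hr => hq.mul hr
        add_mem' := fun hq hr => hq.add hr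
        one_mem' := Ev.one.mr n
        zero_mem' := fun j hj hjn => by simp
        algebraMap_mem' := fun c => by
          intro j hj hjn
          rw [Polynomial.algebraMap_eq, coeff_C, if_neg]
          rintro rfl
          simp [Nat.odd_iff] at hj }
    have hS : Algebra.adjoin K {(X : K[X]) ^ 2, X ^ n} ≤ S := by
      rw [Algebra.adjoin_le_iff]
      rintro q (rfl | rfl)
      · exact MR_X_pow (Or.inl (by exact ⟨1, rfl⟩))
      · exact MR_X_pow (Or.inr le_rfl)
    exact hS hp
  · intro hp
    rw [Polynomial.as_sum_support p]
    apply Subalgebra.sum_mem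
    intro i hi
    rw [← Polynomial.C_mul_X_pow_eq_monomial]
    apply Subalgebra.mul_mem
    · exact Subalgebra.algebraMap_mem _ (p.coeff i)
    · rcases Nat.even_or_odd i with ⟨k, hk⟩ | hio
      · have : (X : K[X]) ^ i = ((X : K[X]) ^ 2) ^ k := by
          rw [← pow_mul]; congr 1; omega
        rw [this]
        exact Subalgebra.pow_mem _ (Algebra.subset_adjoin (by simp)) _
      · have hin : n ≤ i := by
          by_contra hcon
          have hne : p.coeff i ≠ 0 := Polynomial.mem_support_iff.mp hi
          exact hne (hp i hio (by omega))
        have he : Even (i - n) := by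
          rcases hio with ⟨a, ha⟩; rcases hodd with ⟨b, hb⟩
          exact ⟨a - b, by omega⟩
        rcases he with ⟨k, hk⟩
        have : (X : K[X]) ^ i = (X : K[X]) ^ n * ((X : K[X]) ^ 2) ^ k := by
          rw [← pow_mul, ← pow_add]; congr 1; omega
        rw [this]
        exact Subalgebra.mul_mem _ (Algebra.subset_adjoin (by simp))
          (Subalgebra.pow_mem _ (Algebra.subset_adjoin (by simp)) _)

/-- Conductor: if all shifts of `p` satisfy the pattern then `X^(n-1) ∣ p`. -/
lemma dvd_of_forall_MR {n : ℕ} (hn : 1 ≤ n) {p : K[X]} (h : ∀ k, MR n (X ^ k * p)) :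
    (X : K[X]) ^ (n - 1) ∣ p := by
  rw [Polynomial.X_pow_dvd_iff]
  intro j hj
  rcases Nat.even_or_odd j with hje | hjo
  · have := h 1 (j + 1) (by rcases hje with ⟨m, hm⟩; exact ⟨m, by omega⟩) (by omega)
    rwa [pow_one, Polynomial.coeff_X_mul] at this
  · have := h 0 j hjo (by omega)
    rwa [pow_zero, one_mul] at this

lemma MR_of_X_pow_dvd {n : ℕ} (hodd : Odd n) {p q : K[X]} (h : p = X ^ (n - 1) * q) :
    MR n p := by
  subst h
  exact MR_X_pow_mul (by rcases hodd with ⟨m, hm⟩; exact ⟨m, by omega⟩)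
    (by omega)

end CuspAux

namespace CuspAux
open Polynomial
variable {K : Type*} [Field K]

/-- Even part of a polynomial. -/
noncomputable def evP (p : K[X]) : K[X] := Polynomial.expand K 2 (Polynomial.contract 2 p)

lemma coeff_evP (p : K[X]) (j : ℕ) :
    (evP p).coeff j = if Odd j then 0 else p.coeff j := by
  rcases Nat.even_or_odd j with ⟨k, hk⟩ | hj
  · have h2 : j = 2 * k := by omega
    subst h2
    rw [if_neg (by rw [Nat.odd_iff]; omega), evP, coeff_expand_two,
      coeff_contract (by norm_num)]
    congr 1; omega
  · rw [if_pos hj, evP]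
    exact Ev.expand _ j hj

lemma Ev.evP (p : K[X]) : Ev (evP p) := fun j hj => by rw [coeff_evP, if_pos hj]

lemma coeff_sub_evP (p : K[X]) (j : ℕ) :
    (p - evP p).coeff j = if Odd j then p.coeff j else 0 := by
  rw [coeff_sub, coeff_evP]
  split <;> ring

/-- Even inverse of an even polynomial modulo `X^(2N)`. -/
lemma exists_even_inv {u : K[X]} (hu : Ev u) (h0 : u.coeff 0 ≠ 0) (N : ℕ) :
    ∃ v, Ev v ∧ X ^ (2 * N) ∣ u * v - 1 := by
  obtain ⟨w, hw⟩ := exists_inv_mod (p := Polynomial.contract 2 u)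
    (by rwa [coeff_contract (by norm_num), zero_mul]) N
  refine ⟨Polynomial.expand K 2 w, Ev.expand w, ?_⟩
  have := map_dvd (Polynomial.expand K 2) hw
  rw [map_sub, map_mul, map_one, map_pow, Polynomial.expand_X, hu.expand_contract,
    ← pow_mul] at this
  exact this

/-- Representation of polynomials with no odd coefficients below `f`. -/
lemma rep1 {f : ℕ} (hf : Odd f) {p : K[X]} :
    (∀ j, Odd j → j < f → p.coeff j = 0) ↔
      ∃ p₀ q : K[X], p = p₀.comp (X ^ 2) + X ^ (f - 1) * q := by
  constructor
  · intro h
    have hdvd : (X : K[X]) ^ (f - 1) ∣ p - evP p := by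
      rw [Polynomial.X_pow_dvd_iff]
      intro j hj
      rw [coeff_sub_evP]
      split
      · exact h j (by assumption) (by omega)
      · rfl
    obtain ⟨q, hq⟩ := hdvd
    refine ⟨Polynomial.contract 2 p, q, ?_⟩
    rw [← expand_eq_comp_X_pow]
    have : Polynomial.expand K 2 (Polynomial.contract 2 p) = evP p := rfl
    rw [this, ← hq]
    ring
  · rintro ⟨p₀, q, rfl⟩ j hj hjf
    rw [coeff_add, ev_comp_X_sq p₀ j hj, coeff_X_pow_mul_lt, add_zero]
    rcases hj with ⟨m, hm⟩; rcases hf with ⟨l, hl⟩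
    omega

/-- Representation of elements of the Fitting ideal. -/
lemma rep2 {n f : ℕ} (hno : Odd n) (hf : Odd f) (hf1 : 0 < f) (hfn : f ≤ n) {p : K[X]} :
    (MR n p ∧ (X : K[X]) ^ (n - f) ∣ p) ↔
      ∃ p₀ q : K[X], p = X ^ (n - f) * p₀.comp (X ^ 2) + X ^ (n - 1) * q := by
  constructor
  · rintro ⟨hmr, s, hs⟩
    have hlow : ∀ j, Odd j → j < f → s.coeff j = 0 := by
      intro j hj hjf
      have := hmr (j + (n - f)) (by
        rcases hj with ⟨m, hm⟩; rcases hf with ⟨l, hl⟩; rcases hno with ⟨l', hl'⟩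
        exact ⟨m + l' - l, by omega⟩) (by omega)
      rwa [hs, Polynomial.coeff_X_pow_mul] at this
    obtain ⟨p₀, q, hpq⟩ := rep1 hf |>.mp hlow
    refine ⟨p₀, q, ?_⟩
    rw [hs, hpq]
    rw [mul_add, ← mul_assoc, ← pow_add]
    congr 3
    omega
  · rintro ⟨p₀, q, rfl⟩
    constructor
    · apply MR.add
      · intro j hj hjn
        apply odd_conv hj
        · intro i hi hij
          rw [coeff_X_pow, if_neg]
          rintro rfl
          rcases hno with ⟨l, hl⟩; rcases hf with ⟨m, hm⟩; rcases hi with ⟨o, ho⟩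
          omega
        · intro i hi _
          exact ev_comp_X_sq p₀ i hi
      · exact MR_X_pow_mul (by rcases hno with ⟨l, hl⟩; exact ⟨l, by omega⟩) (by omega)
    · apply dvd_add
      · exact Dvd.dvd.mul_right (dvd_refl _) _
      · exact Dvd.dvd.mul_right (pow_dvd_pow _ (by omega)) _

end CuspAux

namespace CuspAux
open Polynomial
variable {K : Type*} [Field K]

lemma claim1 {n γ : ℕ} (hγo : Odd γ) (hγn : γ < n) {c : K[X]}
    (hc : ∀ j, Odd j → j < γ → c.coeff j = 0) (hcγ : c.coeff γ ≠ 0)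
    {τ : K[X]} (hτ : MR n τ) (hcτ : MR n (c * τ)) : (X : K[X]) ^ (n - γ) ∣ τ := by
  rw [Polynomial.X_pow_dvd_iff]
  have key : ∀ j, j < n - γ → τ.coeff j = 0 := by
    intro j
    induction j using Nat.strong_induction_on with
    | _ j IH =>
      intro hjn
      rcases Nat.even_or_odd j with hje | hjo
      · -- even case: look at coefficient γ + j of c * τ
        have hsum : (c * τ).coeff (γ + j) = 0 := by
          apply hcτ (γ + j)
          · rcases hγo with ⟨m, hm⟩; rcases hje with ⟨l, hl⟩; exact ⟨m + l, by omega⟩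
          · omega
        rw [coeff_mul] at hsum
        have hone : ∑ x ∈ Finset.HasAntidiagonal.antidiagonal (γ + j), c.coeff x.1 * τ.coeff x.2
            = c.coeff γ * τ.coeff j := by
          apply Finset.sum_eq_single (γ, j)
          · rintro ⟨i, k⟩ hik hne
            rw [Finset.HasAntidiagonal.mem_antidiagonal] at hik
            rcases Nat.even_or_odd k with hke | hko
            · rcases lt_trichotomy k j with hkj | rfl | hkj
              · rw [IH k (by omega) (by omega), mul_zero]
              · exact absurd (by omega : i = γ) (by simpa using fun h => hne (by simp [h]))
              · have hio : Odd i := by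
                  rcases hγo with ⟨m, hm⟩; rcases hje with ⟨l, hl⟩; rcases hke with ⟨o, ho⟩
                  exact ⟨(γ + j - k) / 2, by omega⟩
                rw [hc i hio (by omega), zero_mul]
            · rw [hτ k hko (by omega), mul_zero]
          · intro hni
            simp [Finset.HasAntidiagonal.mem_antidiagonal] at hni
        rw [hone] at hsum
        exact (mul_eq_zero.mp hsum).resolve_left hcγ
      · exact hτ j hjo (by omega)
  exact key

lemma odd_add_even {γ i : ℕ} (hγ : Odd γ) (hi : Even i) : Odd (γ + i) := by
  rcases hγ with ⟨m, hm⟩; rcases hi with ⟨l, hl⟩; exact ⟨m + l, by omega⟩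

/-- The data extracted from the odd part of `c`. -/
lemma odd_part_data {n γ : ℕ} (hγo : Odd γ) (hγn : γ < n) {c : K[X]}
    (hc : ∀ j, Odd j → j < γ → c.coeff j = 0) (hcγ : c.coeff γ ≠ 0) :
    ∃ u : K[X], c = evP c + X ^ γ * u ∧ Ev u ∧ u.coeff 0 ≠ 0 := by
  have hdvd : (X : K[X]) ^ γ ∣ c - evP c := by
    rw [Polynomial.X_pow_dvd_iff]
    intro j hj
    rw [coeff_sub_evP]
    split
    · exact hc j (by assumption) hj
    · rfl
  obtain ⟨u, hu⟩ := hdvd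
  refine ⟨u, by linear_combination hu, ?_, ?_⟩
  · intro i hi
    have h1 := Polynomial.coeff_X_pow_mul u γ i
    rw [← hu, coeff_sub_evP, if_neg] at h1
    · exact h1.symm
    · rcases hi with ⟨m, hm⟩; rcases hγo with ⟨l, hl⟩
      rw [Nat.odd_iff]; omega
  · have h1 := Polynomial.coeff_X_pow_mul u γ 0
    rw [← hu, zero_add, coeff_sub_evP, if_pos hγo] at h1
    rw [← h1]
    exact hcγ

lemma witnessA {n γ : ℕ} (hγo : Odd γ) (hγn : γ < n) {c : K[X]}
    (hc : ∀ j, Odd j → j < γ → c.coeff j = 0) (hcγ : c.coeff γ ≠ 0) :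
    ∃ τ, MR n τ ∧ MR n (X ^ γ - c * τ) := by
  obtain ⟨u, hu, huev, hu0⟩ := odd_part_data hγo hγn hc hcγ
  obtain ⟨v, hvev, s, hs⟩ := exists_even_inv huev hu0 n
  refine ⟨v, hvev.mr n, ?_⟩
  have hid : X ^ γ - c * v = -(evP c * v) - X ^ (γ + 2 * n) * s := by
    have hpw : (X : K[X]) ^ (γ + 2 * n) = X ^ γ * X ^ (2 * n) := by rw [pow_add]
    rw [hpw]
    linear_combination (-v) * hu - (X : K[X]) ^ γ * hs
  rw [hid]
  apply MR.sub
  · exact (((Ev.evP c).mul hvev).mr n).neg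
  · exact fun j hj hjn => coeff_X_pow_mul_lt (by omega)

lemma witnessB {n γ : ℕ} (hγo : Odd γ) (hγn : γ < n) {c : K[X]}
    (hc : ∀ j, Odd j → j < γ → c.coeff j = 0) (hcγ : c.coeff γ ≠ 0) :
    ∃ τ, MR n (c * τ) ∧ MR n (X ^ γ - τ) := by
  obtain ⟨u, hu, huev, hu0⟩ := odd_part_data hγo hγn hc hcγ
  obtain ⟨v, hvev, s, hs⟩ := exists_even_inv huev hu0 n
  refine ⟨X ^ γ - v * evP c, ?_, ?_⟩
  · have hid : c * (X ^ γ - v * evP c) =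
        X ^ (2 * γ) * u - (evP c * evP c) * v - X ^ (γ + 2 * n) * (s * evP c) := by
      have h1 : (X : K[X]) ^ (γ + 2 * n) = X ^ γ * X ^ (2 * n) := by rw [pow_add]
      have h2 : (X : K[X]) ^ (2 * γ) = X ^ γ * X ^ γ := by
        rw [← pow_add]; congr 1; omega
      rw [h1, h2]
      linear_combination (X ^ γ - v * evP c) * hu + (-(X:K[X]) ^ γ * evP c) * hs
    rw [hid]
    apply MR.sub
    apply MR.sub
    · exact ((Ev.X_pow ⟨γ, by omega⟩).mul huev).mr n
    · exact (((Ev.evP c).mul (Ev.evP c)).mul hvev).mr n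
    · exact fun j hj hjn => coeff_X_pow_mul_lt (by omega)
  · have : X ^ γ - (X ^ γ - v * evP c) = v * evP c := by ring
    rw [this]
    exact (hvev.mul (Ev.evP c)).mr n

lemma split_odd_low {f : ℕ} (hf : Odd f) (p : K[X]) :
    ∃ Y h : K[X], p = evP p + X ^ f * Y + h ∧ Ev Y ∧
      (∀ i, i < f → h.coeff i = (if Odd i then p.coeff i else 0)) ∧
      (∀ i, f ≤ i → h.coeff i = 0) := by
  set podd := p - evP p with hpodd
  set h := podd %ₘ X ^ f with hh
  set Y := podd /ₘ X ^ f with hY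
  have hdiv : h + X ^ f * Y = podd := Polynomial.modByMonic_add_div podd (X ^ f)
  have hhigh : ∀ i, f ≤ i → h.coeff i = 0 := by
    intro i hi
    apply Polynomial.coeff_eq_zero_of_degree_lt
    calc h.degree < (X ^ f : K[X]).degree := Polynomial.degree_modByMonic_lt podd (monic_X_pow f)
    _ = (f : ℕ) := Polynomial.degree_X_pow f
    _ ≤ (i : ℕ) := by exact_mod_cast Nat.cast_le.mpr hi
  have hlow : ∀ i, i < f → h.coeff i = (if Odd i then p.coeff i else 0) := by
    intro i hi
    have : h.coeff i = podd.coeff i - (X ^ f * Y).coeff i := by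
      rw [← hdiv]; simp
    rw [this, coeff_X_pow_mul_lt hi, sub_zero, hpodd, coeff_sub_evP]
  refine ⟨Y, h, by linear_combination -hdiv, ?_, hlow, hhigh⟩
  intro i hi
  have h1 := Polynomial.coeff_X_pow_mul Y f i
  have h2 : (X ^ f * Y).coeff (i + f) = podd.coeff (i + f) - h.coeff (i + f) := by
    rw [← hdiv]; simp
  rw [h2, hhigh (i + f) (by omega), sub_zero, hpodd, coeff_sub_evP, if_neg] at h1
  · exact h1.symm
  · rcases hi with ⟨m, hm⟩; rcases hf with ⟨l, hl⟩
    rw [Nat.odd_iff]; omega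

end CuspAux

namespace CuspAux
open Polynomial

variable {K : Type*} [Field K]

lemma relFittingIdeal_comm {R : Type*} [CommRing R] (a b : R) :
    relFittingIdeal a b = relFittingIdeal b a := by
  unfold relFittingIdeal
  congr 1
  ext r
  constructor
  · rintro (⟨s, hs⟩ | ⟨s, hs⟩)
    · exact Or.inr ⟨s, by linear_combination hs⟩
    · exact Or.inl ⟨s, by linear_combination hs⟩
  · rintro (⟨s, hs⟩ | ⟨s, hs⟩)
    · exact Or.inr ⟨s, by linear_combination hs⟩
    · exact Or.inl ⟨s, by linear_combination hs⟩

set_option maxHeartbeats 1000000 in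
theorem conj2_main (n : ℕ) (hn : 3 ≤ n) (hodd : Odd n)
    (f : ℕ) (hfodd : Odd f) (hfn : f ≤ n)
    (a b : Algebra.adjoin K {(X : K[X]) ^ 2, X ^ n})
    (hb : (b : K[X]) ≠ 0)
    (d a' b' : K[X]) (hd : d ≠ 0) (hda : (a : K[X]) = d * a') (hdb : (b : K[X]) = d * b')
    (hcop : IsCoprime a' b') (ha'0 : a'.coeff 0 ≠ 0)
    (hfI : ∀ y, y ∈ Ideal.span {a, b} → ∃ z, z ∈ Ideal.span {a, b} ∧
      (z : K[X]) = X ^ f * (y : K[X]))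
    (hfmin : ∀ g, 0 < g → Odd g →
      (∀ y, y ∈ Ideal.span {a, b} → ∃ z, z ∈ Ideal.span {a, b} ∧
        (z : K[X]) = X ^ g * (y : K[X])) →
      f ≤ g) :
    ∀ r, r ∈ relFittingIdeal a b ↔
      MR n (r : K[X]) ∧ (X : K[X]) ^ (n - f) ∣ (r : K[X]) := by
  have hmem : ∀ p : K[X], p ∈ Algebra.adjoin K {(X : K[X]) ^ 2, X ^ n} ↔ MR n p :=
    fun p => mem_adjoin_iff hodd p
  have hb' : b' ≠ 0 := by
    intro h; rw [h, mul_zero] at hdb; exact hb hdb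
  have ha' : a' ≠ 0 := by
    intro h
    apply ha'0
    rw [h, Polynomial.coeff_zero]
  obtain ⟨w, e, he⟩ := exists_inv_mod ha'0 (2 * n)
  set c : K[X] := b' * w with hcdef
  set Sγ : Set ℕ := {j | Odd j ∧ j < n ∧ c.coeff j ≠ 0} ∪ {n} with hSγ
  set γ : ℕ := sInf Sγ with hγdef
  have hmemγ : γ ∈ Sγ := Nat.sInf_mem ⟨n, Or.inr rfl⟩
  have hγo : Odd γ := by
    rcases hmemγ with h | h
    · exact h.1
    · rw [Set.mem_singleton_iff] at h; rw [h]; exact hodd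
  have hγn : γ ≤ n := by
    rcases hmemγ with h | h
    · exact h.2.1.le
    · rw [Set.mem_singleton_iff] at h; omega
  have hγmin : ∀ j, Odd j → j < γ → c.coeff j = 0 := by
    intro j hj hjγ
    by_contra hne
    have hjS : j ∈ Sγ := Or.inl ⟨hj, by omega, hne⟩
    have := Nat.sInf_le hjS
    omega
  have hγc : γ < n → c.coeff γ ≠ 0 := by
    intro hlt
    rcases hmemγ with h | h
    · exact h.2.2
    · rw [Set.mem_singleton_iff] at h; omega
  have hγpos : 0 < γ := hγo.pos
  -- coefficient transfer below degree 2n through multiplication by a' * w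
  have htrans : ∀ τ : K[X], ∀ j, j < 2 * n → (a' * (w * τ)).coeff j = τ.coeff j := by
    intro τ j hj
    refine coeff_eq_of_dvd_sub ⟨e * τ, ?_⟩ hj
    linear_combination τ * he
  -- combination elements of the ideal
  have hcomb : ∀ u v : K[X], MR n u → MR n v →
      ∃ z, z ∈ Ideal.span {a, b} ∧ (z : K[X]) = u * (a : K[X]) + v * (b : K[X]) := by
    intro u v hu hv
    refine ⟨⟨u, (hmem u).mpr hu⟩ * a + ⟨v, (hmem v).mpr hv⟩ * b, ?_, by push_cast; ring⟩
    exact Ideal.add_mem _ (Ideal.mul_mem_left _ _ (Ideal.subset_span (by simp)))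
      (Ideal.mul_mem_left _ _ (Ideal.subset_span (by simp)))
  have hstep : ∀ g : ℕ,
      (∃ u v, MR n u ∧ MR n v ∧ X ^ g * (a : K[X]) = u * (a : K[X]) + v * (b : K[X])) →
      (∃ u v, MR n u ∧ MR n v ∧ X ^ g * (b : K[X]) = u * (a : K[X]) + v * (b : K[X])) →
      ∀ y, y ∈ Ideal.span {a, b} → ∃ z, z ∈ Ideal.span {a, b} ∧
        (z : K[X]) = X ^ g * (y : K[X]) := by
    rintro g ⟨u1, v1, hu1, hv1, hida⟩ ⟨u2, v2, hu2, hv2, hidb⟩ y hy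
    obtain ⟨r, s, hrs⟩ := Ideal.mem_span_pair.mp hy
    obtain ⟨za, hza, hzaeq⟩ := hcomb u1 v1 hu1 hv1
    obtain ⟨zb, hzb, hzbeq⟩ := hcomb u2 v2 hu2 hv2
    refine ⟨r * za + s * zb,
      Ideal.add_mem _ (Ideal.mul_mem_left _ _ hza) (Ideal.mul_mem_left _ _ hzb), ?_⟩
    have h1 : ((r * za + s * zb : Algebra.adjoin K {(X : K[X]) ^ 2, X ^ n}) : K[X])
        = (r : K[X]) * (za : K[X]) + (s : K[X]) * (zb : K[X]) := by push_cast; ring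
    have h2 : (y : K[X]) = (r : K[X]) * (a : K[X]) + (s : K[X]) * (b : K[X]) := by
      rw [← hrs]; push_cast; ring
    rw [h1, hzaeq, hzbeq, h2]
    linear_combination (-(r : K[X])) * hida + (-(s : K[X])) * hidb
  -- f ≤ γ
  have hfγ : f ≤ γ := by
    rcases Nat.lt_or_ge γ n with hγlt | hge
    · obtain ⟨τ, hτ, hXcτ⟩ := witnessA hγo hγlt hγmin (hγc hγlt)
      obtain ⟨τ', hcτ', hXτ'⟩ := witnessB hγo hγlt hγmin (hγc hγlt)
      apply hfmin γ hγpos hγo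
      apply hstep γ
      · refine ⟨X ^ γ - c * τ, a' * (w * τ), hXcτ, ?_, ?_⟩
        · intro j hj hjn
          rw [htrans τ j (by omega)]
          exact hτ j hj hjn
        · rw [hcdef]
          linear_combination (b' * w * τ) * hda - (a' * w * τ) * hdb
      · refine ⟨b' * (w * τ'), X ^ γ - a' * (w * τ'), ?_, ?_, ?_⟩
        · have heq : b' * (w * τ') = c * τ' := by rw [hcdef]; ring
          rw [heq]; exact hcτ'
        · intro j hj hjn
          have hsub : (X : K[X]) ^ (2 * n) ∣
              (X ^ γ - a' * (w * τ')) - (X ^ γ - τ') := by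
            refine ⟨-(e * τ'), ?_⟩
            linear_combination (-τ') * he
          rw [coeff_eq_of_dvd_sub hsub (by omega : j < 2 * n)]
          exact hXτ' j hj hjn
        · linear_combination (-(b' * w * τ')) * hda + (a' * w * τ') * hdb
    · omega
  -- γ ≤ f
  have hγf : γ ≤ f := by
    by_contra hlt
    push_neg at hlt
    obtain ⟨z, hz, hzeq⟩ := hfI a (Ideal.subset_span (by simp))
    obtain ⟨u, v, huv⟩ := Ideal.mem_span_pair.mp hz
    have hpoly : X ^ f * (a : K[X]) = (u : K[X]) * (a : K[X]) + (v : K[X]) * (b : K[X]) := by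
      rw [← hzeq, ← huv]; push_cast; ring
    have hu : MR n (u : K[X]) := (hmem _).mp u.2
    have hv : MR n (v : K[X]) := (hmem _).mp v.2
    have h1 : d * ((X ^ f - (u : K[X])) * a') = d * ((v : K[X]) * b') := by
      linear_combination -((X ^ f - (u : K[X])) * hda) + (v : K[X]) * hdb + hpoly
    have heq : (X ^ f - (u : K[X])) * a' = (v : K[X]) * b' := mul_left_cancel₀ hd h1
    have hbdvd : b' ∣ X ^ f - (u : K[X]) := by
      apply hcop.symm.dvd_of_dvd_mul_right
      exact ⟨(v : K[X]), by linear_combination heq⟩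
    obtain ⟨t, ht⟩ := hbdvd
    -- coefficient f of c * (a' * t) in two ways
    have hzero : (c * (a' * t)).coeff f = 0 := by
      apply odd_conv hfodd
      · intro i hi hif
        exact hγmin i hi (by omega)
      · intro i hi hif
        have hveq : (a' * t) * b' = (v : K[X]) * b' := by
          linear_combination heq - a' * ht
        have : a' * t = (v : K[X]) := mul_right_cancel₀ hb' hveq
        rw [this]
        exact hv i hi (by omega)
    have hone : (c * (a' * t)).coeff f = 1 := by
      have hsub : (X : K[X]) ^ (2 * n) ∣ c * (a' * t) - (X ^ f - (u : K[X])) := by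
        refine ⟨(X ^ f - (u : K[X])) * e, ?_⟩
        rw [hcdef]
        linear_combination (-(a' * w)) * ht + (X ^ f - (u : K[X])) * he
      rw [coeff_eq_of_dvd_sub hsub (by omega : f < 2 * n)]
      rw [coeff_sub, coeff_X_pow, if_pos rfl, hu f hfodd (by omega), sub_zero]
    rw [hzero] at hone
    exact one_ne_zero hone.symm
  have hfeq : γ = f := le_antisymm hγf hfγ
  -- coprimality of X-powers with a'
  have hXcop : ∀ k : ℕ, IsCoprime ((X : K[X]) ^ k) a' :=
    fun k => (((Polynomial.irreducible_X).coprime_iff_not_dvd).mpr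
      (by rw [Polynomial.X_dvd_iff]; exact ha'0)).pow_left
  -- generators of the Fitting ideal coming from t with a't, b't ∈ R
  have hgen : ∀ (t : K[X]) (hat : MR n (a' * t)) (hbt : MR n (b' * t)),
      ((⟨a' * t, (hmem _).mpr hat⟩ : Algebra.adjoin K {(X : K[X]) ^ 2, X ^ n})
          ∈ relFittingIdeal a b ∧
        (⟨b' * t, (hmem _).mpr hbt⟩ : Algebra.adjoin K {(X : K[X]) ^ 2, X ^ n})
          ∈ relFittingIdeal a b) := by
    intro t hat hbt
    constructor
    · apply Ideal.subset_span
      right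
      refine ⟨⟨-(b' * t), (hmem _).mpr hbt.neg⟩, ?_⟩
      apply Subtype.ext
      push_cast
      linear_combination (-(b' * t)) * hda + (a' * t) * hdb
    · apply Ideal.subset_span
      left
      refine ⟨⟨-(a' * t), (hmem _).mpr hat.neg⟩, ?_⟩
      apply Subtype.ext
      push_cast
      linear_combination (b' * t) * hda + (-(a' * t)) * hdb
  have hevn1 : Even (n - 1) := by rcases hodd with ⟨m, hm⟩; exact ⟨m, by omega⟩
  -- conductor elements belong to the ideal
  obtain ⟨u₀, v₀, huv₀⟩ := id hcop
  have hcond : ∀ (q : K[X]) (hq : MR n (X ^ (n - 1) * q)),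
      ((⟨X ^ (n - 1) * q, (hmem _).mpr hq⟩ : Algebra.adjoin K {(X : K[X]) ^ 2, X ^ n})
        ∈ relFittingIdeal a b) := by
    intro q hq
    have e1 : a' * (u₀ * (X ^ (n - 1) * q)) = X ^ (n - 1) * (a' * (u₀ * q)) := by ring
    have e2 : b' * (u₀ * (X ^ (n - 1) * q)) = X ^ (n - 1) * (b' * (u₀ * q)) := by ring
    have e3 : a' * (v₀ * (X ^ (n - 1) * q)) = X ^ (n - 1) * (a' * (v₀ * q)) := by ring
    have e4 : b' * (v₀ * (X ^ (n - 1) * q)) = X ^ (n - 1) * (b' * (v₀ * q)) := by ring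
    have h1 : MR n (a' * (u₀ * (X ^ (n - 1) * q))) := by
      rw [e1]; exact MR_X_pow_mul hevn1 (by omega)
    have h2 : MR n (b' * (u₀ * (X ^ (n - 1) * q))) := by
      rw [e2]; exact MR_X_pow_mul hevn1 (by omega)
    have h3 : MR n (a' * (v₀ * (X ^ (n - 1) * q))) := by
      rw [e3]; exact MR_X_pow_mul hevn1 (by omega)
    have h4 : MR n (b' * (v₀ * (X ^ (n - 1) * q))) := by
      rw [e4]; exact MR_X_pow_mul hevn1 (by omega)
    have heq : (⟨X ^ (n - 1) * q, (hmem _).mpr hq⟩ :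
        Algebra.adjoin K {(X : K[X]) ^ 2, X ^ n}) =
        ⟨a' * (u₀ * (X ^ (n - 1) * q)), (hmem _).mpr h1⟩ +
          ⟨b' * (v₀ * (X ^ (n - 1) * q)), (hmem _).mpr h4⟩ := by
      apply Subtype.ext
      push_cast
      linear_combination (-(X ^ (n - 1) * q)) * huv₀
    rw [heq]
    exact Ideal.add_mem _ (hgen _ h1 h2).1 (hgen _ h3 h4).2
  -- the monomial X^(n-γ) belongs to the ideal
  have hnγeven : Even (n - γ) := by
    rcases hodd with ⟨m, hm⟩
    rcases hγo with ⟨l, hl⟩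
    exact ⟨m - l, by omega⟩
  have hXmr : MR n ((X : K[X]) ^ (n - γ)) := MR_X_pow (Or.inl hnγeven)
  have hXnγ : ((⟨(X : K[X]) ^ (n - γ), (hmem _).mpr hXmr⟩ :
      Algebra.adjoin K {(X : K[X]) ^ 2, X ^ n}) ∈ relFittingIdeal a b) := by
    have hat : MR n (a' * (w * X ^ (n - γ))) := by
      intro j hj hjn
      rw [htrans _ j (by omega)]
      exact hXmr j hj hjn
    have hbt : MR n (b' * (w * X ^ (n - γ))) := by
      have e5 : b' * (w * X ^ (n - γ)) = X ^ (n - γ) * c := by rw [hcdef]; ring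
      rw [e5]
      intro j hj hjn
      rcases Nat.lt_or_ge j (n - γ) with hjlt | hjge
      · exact coeff_X_pow_mul_lt hjlt
      · have hj' : j = (j - (n - γ)) + (n - γ) := by omega
        rw [hj', Polynomial.coeff_X_pow_mul]
        apply hγmin
        · rcases hj with ⟨m, hm⟩; rcases hodd with ⟨l, hl⟩; rcases hγo with ⟨o, ho⟩
          exact ⟨m - (l - o), by omega⟩
        · omega
    have hQmr : MR n (X ^ (n - 1) * (X ^ (2 * n + 1 - γ) * e)) :=
      MR_X_pow_mul hevn1 (by omega)
    have heq : (⟨(X : K[X]) ^ (n - γ), (hmem _).mpr hXmr⟩ :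
        Algebra.adjoin K {(X : K[X]) ^ 2, X ^ n}) =
        ⟨a' * (w * X ^ (n - γ)), (hmem _).mpr hat⟩ -
          ⟨X ^ (n - 1) * (X ^ (2 * n + 1 - γ) * e), (hmem _).mpr hQmr⟩ := by
      apply Subtype.ext
      push_cast
      have hpw : (X : K[X]) ^ (n - 1) * X ^ (2 * n + 1 - γ) = X ^ (n - γ) * X ^ (2 * n) := by
        rw [← pow_add, ← pow_add]
        congr 1
        omega
      have : (X : K[X]) ^ (n - 1) * (X ^ (2 * n + 1 - γ) * e)
          = X ^ (n - γ) * (X ^ (2 * n) * e) := by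
        rw [← mul_assoc, hpw]; ring
      rw [this]
      linear_combination (-(X ^ (n - γ) : K[X])) * he
    rw [heq]
    exact Submodule.sub_mem _ (hgen _ hat hbt).1 (hcond _ hQmr)
  -- main equivalence
  intro r
  constructor
  · intro hr
    refine Submodule.span_induction ?_ ?_ ?_ ?_ hr
    · rintro x (⟨s, hs⟩ | ⟨s, hs⟩)
      · -- first kind : x * a + s * b = 0
        have hx : MR n (x : K[X]) := (hmem _).mp x.2
        have hsmr : MR n (s : K[X]) := (hmem _).mp s.2
        have hpoly : (x : K[X]) * (a : K[X]) + (s : K[X]) * (b : K[X]) = 0 := by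
          have := congrArg (fun z : Algebra.adjoin K {(X : K[X]) ^ 2, X ^ n} => (z : K[X])) hs
          push_cast at this
          exact this
        have h1 : (x : K[X]) * a' = -((s : K[X]) * b') :=
          mul_left_cancel₀ hd (by
            linear_combination (-(x : K[X])) * hda - (s : K[X]) * hdb + hpoly)
        have hbdvd : b' ∣ (x : K[X]) := by
          apply hcop.symm.dvd_of_dvd_mul_right
          exact ⟨-(s : K[X]), by linear_combination h1⟩
        obtain ⟨t, ht⟩ := hbdvd
        have hat : a' * t = -(s : K[X]) := by
          apply mul_right_cancel₀ hb'
          linear_combination h1 - a' * ht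
        have hτmr : MR n (a' * t) := by rw [hat]; exact hsmr.neg
        have hcτmr : MR n (c * (a' * t)) := by
          have hsub : (X : K[X]) ^ (2 * n) ∣ c * (a' * t) - (x : K[X]) := by
            refine ⟨e * (x : K[X]), ?_⟩
            rw [hcdef]
            linear_combination (-(a' * w)) * ht + (x : K[X]) * he
          intro j hj hjn
          rw [coeff_eq_of_dvd_sub hsub (by omega : j < 2 * n)]
          exact hx j hj hjn
        refine ⟨hx, ?_⟩
        rw [← hfeq]
        rcases Nat.lt_or_ge γ n with hγlt | hge
        · have hdt : (X : K[X]) ^ (n - γ) ∣ a' * t :=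
            claim1 hγo hγlt hγmin (hγc hγlt) hτmr hcτmr
          have hdt' : (X : K[X]) ^ (n - γ) ∣ t :=
            (hXcop (n - γ)).dvd_of_dvd_mul_left hdt
          rw [ht]
          exact hdt'.mul_left b'
        · have : n - γ = 0 := by omega
          rw [this, pow_zero]
          exact one_dvd _
      · -- second kind : s * a + x * b = 0
        have hx : MR n (x : K[X]) := (hmem _).mp x.2
        have hsmr : MR n (s : K[X]) := (hmem _).mp s.2
        have hpoly : (s : K[X]) * (a : K[X]) + (x : K[X]) * (b : K[X]) = 0 := by
          have := congrArg (fun z : Algebra.adjoin K {(X : K[X]) ^ 2, X ^ n} => (z : K[X])) hs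
          push_cast at this
          exact this
        have h1 : (x : K[X]) * b' = -((s : K[X]) * a') :=
          mul_left_cancel₀ hd (by
            linear_combination (-(s : K[X])) * hda - (x : K[X]) * hdb + hpoly)
        have hadvd : a' ∣ (x : K[X]) := by
          apply hcop.dvd_of_dvd_mul_right
          exact ⟨-(s : K[X]), by linear_combination h1⟩
        obtain ⟨t, ht⟩ := hadvd
        have hbt : b' * t = -(s : K[X]) := by
          apply mul_right_cancel₀ ha'
          linear_combination h1 - b' * ht
        have hcτmr : MR n (c * (x : K[X])) := by
          have hsub : (X : K[X]) ^ (2 * n) ∣ c * (x : K[X]) - (-(s : K[X])) := by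
            refine ⟨e * (-(s : K[X])), ?_⟩
            rw [hcdef, ht]
            linear_combination (-(a' * w)) * hbt.symm + (-(s : K[X])) * he
          intro j hj hjn
          rw [coeff_eq_of_dvd_sub hsub (by omega : j < 2 * n)]
          exact hsmr.neg j hj hjn
        refine ⟨hx, ?_⟩
        rw [← hfeq]
        rcases Nat.lt_or_ge γ n with hγlt | hge
        · exact claim1 hγo hγlt hγmin (hγc hγlt) hx hcτmr
        · have : n - γ = 0 := by omega
          rw [this, pow_zero]
          exact one_dvd _
    · exact ⟨fun j hj hjn => by simp, by simp⟩
    · rintro x y _ _ ⟨hx1, hx2⟩ ⟨hy1, hy2⟩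
      exact ⟨by push_cast; exact hx1.add hy1, by push_cast; exact dvd_add hx2 hy2⟩
    · rintro z x _ ⟨hx1, hx2⟩
      have hz : MR n (z : K[X]) := (hmem _).mp z.2
      simp only [smul_eq_mul]
      have hco : ((z * x : ↥(Algebra.adjoin K {(X : K[X]) ^ 2, X ^ n})) : K[X])
          = (z : K[X]) * (x : K[X]) := by push_cast; ring
      rw [hco]
      exact ⟨hz.mul hx1, hx2.mul_left _⟩
  · rintro ⟨hmr, hdvd⟩
    rw [← hfeq] at hdvd
    obtain ⟨p₀, q, hpq⟩ := (rep2 hodd hγo hγpos hγn).mp ⟨hmr, hdvd⟩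
    have hcompmr : MR n (p₀.comp (X ^ 2)) := (ev_comp_X_sq p₀).mr n
    have hqmr : MR n (X ^ (n - 1) * q) := MR_X_pow_mul hevn1 (by omega)
    have heq : r = ⟨p₀.comp (X ^ 2), (hmem _).mpr hcompmr⟩ *
          ⟨(X : K[X]) ^ (n - γ), (hmem _).mpr hXmr⟩ +
        ⟨X ^ (n - 1) * q, (hmem _).mpr hqmr⟩ := by
      apply Subtype.ext
      push_cast
      rw [hpq]
      ring
    rw [heq]
    exact Ideal.add_mem _ (Ideal.mul_mem_left _ _ hXnγ) (hcond _ hqmr)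

end CuspAux

namespace CuspAux
open Polynomial
variable {K : Type*} [Field K]

lemma contract_add (p q : K[X]) :
    Polynomial.contract 2 (p + q) = Polynomial.contract 2 p + Polynomial.contract 2 q := by
  ext i
  rw [coeff_add, coeff_contract (by norm_num), coeff_contract (by norm_num),
    coeff_contract (by norm_num), coeff_add]

lemma contract_one : Polynomial.contract 2 (1 : K[X]) = 1 := by
  ext i
  rw [coeff_contract (by norm_num), coeff_one, coeff_one]
  by_cases h : i = 0
  · subst h; simp
  · rw [if_neg (by omega), if_neg h]

lemma contract_zero : Polynomial.contract 2 (0 : K[X]) = 0 := by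
  ext i
  rw [coeff_contract (by norm_num), coeff_zero, coeff_zero]

lemma Ev.shift {N : ℕ} (hN : Even N) {p s : K[X]} (hps : p = X ^ N * s) (hp : Ev p) :
    Ev s := by
  intro i hi
  have h1 := Polynomial.coeff_X_pow_mul s N i
  rw [← hps] at h1
  rw [← h1]
  apply hp
  rcases hi with ⟨m, hm⟩; rcases hN with ⟨l, hl⟩
  exact ⟨m + l, by omega⟩

end CuspAux

open Polynomial CuspAux in
set_option synthInstance.maxHeartbeats 1000000 in
set_option maxHeartbeats 1000000 in
/-- Let `K` be a field, `n ≥ 3` odd, `R = K[x², xⁿ] ⊆ K[x]`, `I` a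
nonzero ideal of `R` (with generating pair `(a, b)`) and `f` the smallest positive odd
integer with `x^f I ⊆ I`.  Then `ϱ(I) = K[x²] + K[x]x^{f-1}` (inside `K(x)`),
`Fitt₁(I) = (R : ϱ(I)) = K[x²]x^{n-f} + K[x]x^{n-1}`, and `R/Fitt₁(I)` is isomorphic to
`K[x²]/(x^{n-f})` (written `K[u]/(u^{(n-f)/2})`). -/
theorem cusp_curve_fitting (K : Type*) [Field K] (n : ℕ) (hn : 3 ≤ n) (hodd : Odd n)
    (R : Subalgebra K (Polynomial K))
    (hR : R = Algebra.adjoin K {(Polynomial.X : Polynomial K) ^ 2, Polynomial.X ^ n})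
    (I : Ideal R) (hI : I ≠ ⊥)
    (a b : R) (hab : I = Ideal.span {a, b})
    (f : ℕ) (hfpos : 0 < f) (hfodd : Odd f)
    (hfI : ∀ y : R, y ∈ I → ∃ z : R, z ∈ I ∧
      (z : Polynomial K) = Polynomial.X ^ f * (y : Polynomial K))
    (hfmin : ∀ g : ℕ, 0 < g → Odd g →
      (∀ y : R, y ∈ I → ∃ z : R, z ∈ I ∧
        (z : Polynomial K) = Polynomial.X ^ g * (y : Polynomial K)) → f ≤ g) :
    (∀ g : RatFunc K,
      (∀ y : R, y ∈ I → ∃ z : R, z ∈ I ∧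
          g * algebraMap (Polynomial K) (RatFunc K) (y : Polynomial K) =
            algebraMap (Polynomial K) (RatFunc K) (z : Polynomial K)) ↔
        ∃ p q : Polynomial K, g = algebraMap (Polynomial K) (RatFunc K)
          (p.comp (Polynomial.X ^ 2) + Polynomial.X ^ (f - 1) * q)) ∧
    (∀ r : R, r ∈ relFittingIdeal a b ↔
      ∃ p q : Polynomial K, (r : Polynomial K) =
        Polynomial.X ^ (n - f) * p.comp (Polynomial.X ^ 2) +
          Polynomial.X ^ (n - 1) * q) ∧
    (∀ r : R, r ∈ relFittingIdeal a b ↔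
      ∀ g : RatFunc K,
        (∀ y : R, y ∈ I → ∃ z : R, z ∈ I ∧
            g * algebraMap (Polynomial K) (RatFunc K) (y : Polynomial K) =
              algebraMap (Polynomial K) (RatFunc K) (z : Polynomial K)) →
        ∃ s : R, g * algebraMap (Polynomial K) (RatFunc K) (r : Polynomial K) =
          algebraMap (Polynomial K) (RatFunc K) (s : Polynomial K)) ∧
    Nonempty ((R ⧸ relFittingIdeal a b) ≃+*
      (Polynomial K ⧸ Ideal.span {(Polynomial.X : Polynomial K) ^ ((n - f) / 2)})) := by
  classical
  subst hR
  have hmem : ∀ p : K[X], p ∈ Algebra.adjoin K {(X : K[X]) ^ 2, X ^ n} ↔ MR n p :=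
    fun p => mem_adjoin_iff hodd p
  have halginj : Function.Injective (algebraMap (Polynomial K) (RatFunc K)) :=
    RatFunc.algebraMap_injective K
  have hevf1 : Even (f - 1) := by
    rcases hfodd with ⟨m, hm⟩; exact ⟨m, by omega⟩
  -- f is at most n
  have hfn : f ≤ n := by
    apply hfmin n (by omega) hodd
    intro y hy
    refine ⟨⟨X ^ n, (hmem _).mpr (MR_X_pow (Or.inr le_rfl))⟩ * y, I.mul_mem_left _ hy, ?_⟩
    push_cast; ring
  -- polynomial multipliers
  have hQMR : ∀ P : K[X], MR n P → ∀ y, y ∈ I → ∃ z, z ∈ I ∧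
      (z : K[X]) = P * (y : K[X]) := by
    intro P hP y hy
    exact ⟨⟨P, (hmem P).mpr hP⟩ * y, I.mul_mem_left _ hy, by push_cast; ring⟩
  have hQmul : ∀ P Q : K[X], (∀ y, y ∈ I → ∃ z, z ∈ I ∧ (z : K[X]) = P * (y : K[X])) →
      (∀ y, y ∈ I → ∃ z, z ∈ I ∧ (z : K[X]) = Q * (y : K[X])) →
      ∀ y, y ∈ I → ∃ z, z ∈ I ∧ (z : K[X]) = (P * Q) * (y : K[X]) := by
    intro P Q hP hQ y hy
    obtain ⟨z1, hz1, hz1e⟩ := hQ y hy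
    obtain ⟨z2, hz2, hz2e⟩ := hP z1 hz1
    exact ⟨z2, hz2, by rw [hz2e, hz1e]; ring⟩
  have hQsub : ∀ P Q : K[X], (∀ y, y ∈ I → ∃ z, z ∈ I ∧ (z : K[X]) = P * (y : K[X])) →
      (∀ y, y ∈ I → ∃ z, z ∈ I ∧ (z : K[X]) = Q * (y : K[X])) →
      ∀ y, y ∈ I → ∃ z, z ∈ I ∧ (z : K[X]) = (P - Q) * (y : K[X]) := by
    intro P Q hP hQ y hy
    obtain ⟨z1, hz1, hz1e⟩ := hP y hy
    obtain ⟨z2, hz2, hz2e⟩ := hQ y hy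
    refine ⟨z1 - z2, Submodule.sub_mem _ hz1 hz2, ?_⟩
    push_cast
    rw [hz1e, hz2e]; ring
  have hQadd : ∀ P Q : K[X], (∀ y, y ∈ I → ∃ z, z ∈ I ∧ (z : K[X]) = P * (y : K[X])) →
      (∀ y, y ∈ I → ∃ z, z ∈ I ∧ (z : K[X]) = Q * (y : K[X])) →
      ∀ y, y ∈ I → ∃ z, z ∈ I ∧ (z : K[X]) = (P + Q) * (y : K[X]) := by
    intro P Q hP hQ y hy
    obtain ⟨z1, hz1, hz1e⟩ := hP y hy
    obtain ⟨z2, hz2, hz2e⟩ := hQ y hy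
    refine ⟨z1 + z2, Submodule.add_mem _ hz1 hz2, ?_⟩
    push_cast
    rw [hz1e, hz2e]; ring
  have hQform : ∀ p q : K[X], ∀ y, y ∈ I → ∃ z, z ∈ I ∧
      (z : K[X]) = (p.comp (X ^ 2) + X ^ (f - 1) * q) * (y : K[X]) := by
    intro p q
    obtain ⟨Y, hY⟩ : (X : K[X]) ∣ (q - evP q) := by
      rw [Polynomial.X_dvd_iff, coeff_sub_evP, if_neg (by simp [Nat.odd_iff])]
    have hYe : Ev Y := by
      intro i hi
      have h1 := Polynomial.coeff_X_mul Y i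
      rw [← hY] at h1
      rw [← h1, coeff_sub_evP, if_neg]
      rcases hi with ⟨m, hm⟩
      rw [Nat.odd_iff]; omega
    have hid : p.comp (X ^ 2) + X ^ (f - 1) * q
        = (p.comp (X ^ 2) + X ^ (f - 1) * evP q) + X ^ f * Y := by
      have hfp : (X : K[X]) ^ f = X ^ (f - 1) * X := by
        rw [← pow_succ]; congr 1; omega
      rw [hfp]
      linear_combination (X ^ (f - 1) : K[X]) * hY
    rw [hid]
    apply hQadd
    · exact hQMR _ (((ev_comp_X_sq p).add ((Ev.X_pow hevf1).mul (Ev.evP q))).mr n)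
    · exact hQmul _ _ hfI (hQMR _ (hYe.mr n))
  -- Statement 1
  have H1 : ∀ g : RatFunc K,
      (∀ y, y ∈ I → ∃ z, z ∈ I ∧
          g * algebraMap (Polynomial K) (RatFunc K) (y : Polynomial K) =
            algebraMap (Polynomial K) (RatFunc K) (z : Polynomial K)) ↔
        ∃ p q : Polynomial K, g = algebraMap (Polynomial K) (RatFunc K)
          (p.comp (Polynomial.X ^ 2) + Polynomial.X ^ (f - 1) * q) := by
    intro g
    constructor
    · intro hg
      obtain ⟨y₀, hy₀I, hy₀ne⟩ := Submodule.exists_mem_ne_zero_of_ne_bot hI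
      have hy₀ : (y₀ : K[X]) ≠ 0 := fun h => hy₀ne (ZeroMemClass.coe_eq_zero.mp h)
      have hiter : ∀ k : ℕ, ∃ z, z ∈ I ∧
          algebraMap (Polynomial K) (RatFunc K) (z : K[X]) =
            g ^ k * algebraMap (Polynomial K) (RatFunc K) (y₀ : K[X]) := by
        intro k
        induction k with
        | zero => exact ⟨y₀, hy₀I, by rw [pow_zero, one_mul]⟩
        | succ k ih =>
          obtain ⟨z, hzI, hze⟩ := ih
          obtain ⟨zz, hzzI, hzze⟩ := hg z hzI
          refine ⟨zz, hzzI, ?_⟩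
          calc algebraMap (Polynomial K) (RatFunc K) (zz : K[X])
              = g * algebraMap (Polynomial K) (RatFunc K) (z : K[X]) := hzze.symm
          _ = g * (g ^ k * algebraMap (Polynomial K) (RatFunc K) (y₀ : K[X])) := by rw [hze]
          _ = g ^ (k + 1) * algebraMap (Polynomial K) (RatFunc K) (y₀ : K[X]) := by ring
      obtain ⟨z₁, hz₁I, hz₁e⟩ := hiter 1
      rw [pow_one] at hz₁e
      set D : K[X] := GCDMonoid.gcd (z₁ : K[X]) (y₀ : K[X]) with hD
      have hDne : D ≠ 0 := gcd_ne_zero_of_right hy₀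
      set zn : K[X] := (z₁ : K[X]) / D with hzn
      set yn : K[X] := (y₀ : K[X]) / D with hyn
      have hzD : (z₁ : K[X]) = D * zn :=
        (EuclideanDomain.mul_div_cancel' hDne (gcd_dvd_left _ _)).symm
      have hyD : (y₀ : K[X]) = D * yn :=
        (EuclideanDomain.mul_div_cancel' hDne (gcd_dvd_right _ _)).symm
      have hcopn : IsCoprime zn yn := isCoprime_div_gcd_div_gcd hy₀
      have hynne : yn ≠ 0 := by
        intro h
        rw [h, mul_zero] at hyD
        exact hy₀ hyD
      have hDim : algebraMap (Polynomial K) (RatFunc K) D ≠ 0 := by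
        intro h
        exact hDne (halginj (by rw [h, map_zero]))
      have hgy : g * algebraMap (Polynomial K) (RatFunc K) yn =
          algebraMap (Polynomial K) (RatFunc K) zn := by
        apply mul_left_cancel₀ hDim
        calc algebraMap (Polynomial K) (RatFunc K) D *
            (g * algebraMap (Polynomial K) (RatFunc K) yn)
            = g * algebraMap (Polynomial K) (RatFunc K) (D * yn) := by rw [map_mul]; ring
        _ = g * algebraMap (Polynomial K) (RatFunc K) (y₀ : K[X]) := by rw [← hyD]
        _ = algebraMap (Polynomial K) (RatFunc K) (z₁ : K[X]) := hz₁e.symm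
        _ = algebraMap (Polynomial K) (RatFunc K) D *
            algebraMap (Polynomial K) (RatFunc K) zn := by rw [hzD, map_mul]
      have hdeg : yn.natDegree = 0 := by
        by_contra hdne
        set k : ℕ := (y₀ : K[X]).natDegree + 1 with hk
        obtain ⟨zk, hzkI, hzke⟩ := hiter k
        have e1 : algebraMap (Polynomial K) (RatFunc K) (zn ^ k * (y₀ : K[X])) =
            algebraMap (Polynomial K) (RatFunc K) ((zk : K[X]) * yn ^ k) := by
          rw [map_mul, map_mul, map_pow, map_pow, ← hgy, hzke, mul_pow]
          ring
        have e2 : zn ^ k * (y₀ : K[X]) = (zk : K[X]) * yn ^ k := halginj e1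
        have hdvd : yn ^ k ∣ (y₀ : K[X]) := by
          apply (hcopn.symm.pow (m := k) (n := k)).dvd_of_dvd_mul_left
          exact ⟨(zk : K[X]), by linear_combination e2⟩
        have hle := Polynomial.natDegree_le_of_dvd hdvd hy₀
        rw [Polynomial.natDegree_pow] at hle
        have h3 : k ≤ k * yn.natDegree := by
          calc k = k * 1 := by ring
          _ ≤ k * yn.natDegree := Nat.mul_le_mul_left k (by omega)
        omega
      have hynC : yn = Polynomial.C (yn.coeff 0) := Polynomial.eq_C_of_natDegree_eq_zero hdeg
      have hyn0 : yn.coeff 0 ≠ 0 := by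
        intro h
        rw [h, map_zero] at hynC
        exact hynne hynC
      set P : K[X] := Polynomial.C (yn.coeff 0)⁻¹ * zn with hPdef
      have hgP : g = algebraMap (Polynomial K) (RatFunc K) P := by
        have h1 : algebraMap (Polynomial K) (RatFunc K) (Polynomial.C (yn.coeff 0)⁻¹) *
            algebraMap (Polynomial K) (RatFunc K) yn = 1 := by
          rw [← map_mul]
          nth_rewrite 2 [hynC]
          rw [← Polynomial.C_mul, inv_mul_cancel₀ hyn0, Polynomial.C_1, map_one]
        calc g = g * (algebraMap (Polynomial K) (RatFunc K) (Polynomial.C (yn.coeff 0)⁻¹) *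
            algebraMap (Polynomial K) (RatFunc K) yn) := by rw [h1, mul_one]
        _ = algebraMap (Polynomial K) (RatFunc K) (Polynomial.C (yn.coeff 0)⁻¹) *
            (g * algebraMap (Polynomial K) (RatFunc K) yn) := by ring
        _ = algebraMap (Polynomial K) (RatFunc K) P := by rw [hgy, hPdef, map_mul]
      have hQP : ∀ y, y ∈ I → ∃ z, z ∈ I ∧ (z : K[X]) = P * (y : K[X]) := by
        intro y hy
        obtain ⟨z, hzI, hze⟩ := hg y hy
        refine ⟨z, hzI, halginj ?_⟩
        rw [map_mul, ← hgP, hze]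
      have hPlow : ∀ j, Odd j → j < f → P.coeff j = 0 := by
        by_contra hbad
        push_neg at hbad
        obtain ⟨j₀, hj₀o, hj₀f, hj₀ne⟩ := hbad
        have hTne : ({i | Odd i ∧ i < f ∧ P.coeff i ≠ 0} : Set ℕ).Nonempty :=
          ⟨j₀, hj₀o, hj₀f, hj₀ne⟩
        set j : ℕ := sInf {i | Odd i ∧ i < f ∧ P.coeff i ≠ 0} with hjdef
        obtain ⟨hjo, hjf, hjne⟩ := Nat.sInf_mem hTne
        have hjmin : ∀ i, Odd i → i < j → P.coeff i = 0 := by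
          intro i hi hij
          by_contra hne
          have hiT : i ∈ {i | Odd i ∧ i < f ∧ P.coeff i ≠ 0} := ⟨hi, by omega, hne⟩
          have := Nat.sInf_le hiT
          omega
        obtain ⟨Y, h, hsplit, hYe, hlow, hhigh⟩ := split_odd_low hfodd P
        have hQh : ∀ y, y ∈ I → ∃ z, z ∈ I ∧ (z : K[X]) = h * (y : K[X]) := by
          have hhe : h = P - evP P - X ^ f * Y := by linear_combination -hsplit
          rw [hhe]
          exact hQsub _ _ (hQsub _ _ hQP (hQMR _ ((Ev.evP P).mr n)))
            (hQmul _ _ hfI (hQMR _ (hYe.mr n)))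
        have hXj : (X : K[X]) ^ j ∣ h := by
          rw [Polynomial.X_pow_dvd_iff]
          intro i hij
          rw [hlow i (by omega)]
          split
          · exact hjmin i (by assumption) hij
          · rfl
        obtain ⟨u, hu⟩ := hXj
        have hu0 : u.coeff 0 ≠ 0 := by
          have h1 := Polynomial.coeff_X_pow_mul u j 0
          rw [← hu, zero_add, hlow j hjf, if_pos hjo] at h1
          rw [← h1]
          exact hjne
        have huev : Ev u := by
          intro i hi
          have h1 := Polynomial.coeff_X_pow_mul u j i
          rw [← hu] at h1
          rw [← h1]
          have hev : ¬ Odd (i + j) := by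
            rcases hi with ⟨m, hm⟩; rcases hjo with ⟨l, hl⟩
            rw [Nat.odd_iff]; omega
          rcases Nat.lt_or_ge (i + j) f with hlt | hge
          · rw [hlow _ hlt, if_neg hev]
          · exact hhigh _ hge
        obtain ⟨v, hvev, hdvd⟩ := exists_even_inv huev hu0 f
        obtain ⟨s, hsv⟩ := hdvd
        have hsev : Ev s := Ev.shift ⟨f, by ring⟩ hsv ((huev.mul hvev).sub Ev.one)
        have hQXj : ∀ y, y ∈ I → ∃ z, z ∈ I ∧ (z : K[X]) = X ^ j * (y : K[X]) := by
          have hid2 : (X : K[X]) ^ j = h * v - X ^ f * (X ^ (j + f) * s) := by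
            have hp1 : (X : K[X]) ^ f * (X ^ (j + f) * s) = X ^ j * (X ^ (2 * f) * s) := by
              rw [← mul_assoc, ← mul_assoc, ← pow_add, ← pow_add]
              congr 2
              omega
            rw [hp1, hu]
            linear_combination (-(X : K[X]) ^ j) * hsv
          rw [hid2]
          apply hQsub
          · exact hQmul _ _ hQh (hQMR _ (hvev.mr n))
          · apply hQmul _ _ hfI
            apply hQMR
            apply Ev.mr
            apply Ev.mul _ hsev
            apply Ev.X_pow
            rcases hjo with ⟨m, hm⟩; rcases hfodd with ⟨l, hl⟩
            exact ⟨m + l + 1, by omega⟩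
        have := hfmin j hjo.pos hjo hQXj
        omega
      obtain ⟨p₀, q₀, hpq⟩ := (rep1 hfodd).mp hPlow
      exact ⟨p₀, q₀, by rw [hgP, hpq]⟩
    · rintro ⟨p, q, rfl⟩
      intro y hy
      obtain ⟨z, hzI, hze⟩ := hQform p q y hy
      exact ⟨z, hzI, by rw [← map_mul, ← hze]⟩
  -- Statement 2 (raw form)
  have H2 : ∀ r, r ∈ relFittingIdeal a b ↔
      MR n (r : K[X]) ∧ (X : K[X]) ^ (n - f) ∣ (r : K[X]) := by
    have hfIs : ∀ y, y ∈ Ideal.span {a, b} → ∃ z, z ∈ Ideal.span {a, b} ∧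
        (z : K[X]) = X ^ f * (y : K[X]) := hab ▸ hfI
    have hfmins : ∀ g, 0 < g → Odd g →
        (∀ y, y ∈ Ideal.span {a, b} → ∃ z, z ∈ Ideal.span {a, b} ∧
          (z : K[X]) = X ^ g * (y : K[X])) → f ≤ g := hab ▸ hfmin
    by_cases hA : (a : K[X]) = 0
    · have hBne : (b : K[X]) ≠ 0 := by
        intro hBz
        apply hI
        rw [hab, ZeroMemClass.coe_eq_zero.mp hA, ZeroMemClass.coe_eq_zero.mp hBz]
        simp
      have hnf : n ≤ f := by
        obtain ⟨z, hzI, hze⟩ := hfIs b (Ideal.subset_span (by simp))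
        obtain ⟨u, v, huv⟩ := Ideal.mem_span_pair.mp hzI
        have hzb : X ^ f * (b : K[X]) = (v : K[X]) * (b : K[X]) := by
          rw [← hze, ← huv]
          push_cast
          rw [ZeroMemClass.coe_eq_zero.mp hA]
          push_cast
          ring
        have hXfv : (X : K[X]) ^ f = (v : K[X]) := mul_right_cancel₀ hBne hzb
        have hmr : MR n ((X : K[X]) ^ f) := hXfv ▸ (hmem _).mp v.2
        by_contra hcon
        have hco := hmr f hfodd (by omega)
        rw [Polynomial.coeff_X_pow, if_pos rfl] at hco
        exact one_ne_zero hco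
      have hone : (1 : (Algebra.adjoin K {(X : K[X]) ^ 2, X ^ n})) ∈ relFittingIdeal a b := by
        apply Ideal.subset_span
        left
        exact ⟨0, by rw [ZeroMemClass.coe_eq_zero.mp hA]; ring⟩
      intro r
      constructor
      · intro _
        refine ⟨(hmem _).mp r.2, ?_⟩
        have hz : n - f = 0 := by omega
        rw [hz, pow_zero]
        exact one_dvd _
      · intro _
        have hmm := Ideal.mul_mem_left (relFittingIdeal a b) r hone
        rwa [mul_one] at hmm
    · by_cases hB : (b : K[X]) = 0
      · have hnf : n ≤ f := by
          obtain ⟨z, hzI, hze⟩ := hfIs a (Ideal.subset_span (by simp))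
          obtain ⟨u, v, huv⟩ := Ideal.mem_span_pair.mp hzI
          have hza : X ^ f * (a : K[X]) = (u : K[X]) * (a : K[X]) := by
            rw [← hze, ← huv]
            push_cast
            rw [ZeroMemClass.coe_eq_zero.mp hB]
            push_cast
            ring
          have hXfv : (X : K[X]) ^ f = (u : K[X]) := mul_right_cancel₀ hA hza
          have hmr : MR n ((X : K[X]) ^ f) := hXfv ▸ (hmem _).mp u.2
          by_contra hcon
          have hco := hmr f hfodd (by omega)
          rw [Polynomial.coeff_X_pow, if_pos rfl] at hco
          exact one_ne_zero hco
        have hone : (1 : (Algebra.adjoin K {(X : K[X]) ^ 2, X ^ n})) ∈ relFittingIdeal a b := by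
          apply Ideal.subset_span
          right
          exact ⟨0, by rw [ZeroMemClass.coe_eq_zero.mp hB]; ring⟩
        intro r
        constructor
        · intro _
          refine ⟨(hmem _).mp r.2, ?_⟩
          have hz : n - f = 0 := by omega
          rw [hz, pow_zero]
          exact one_dvd _
        · intro _
          have hmm := Ideal.mul_mem_left (relFittingIdeal a b) r hone
          rwa [mul_one] at hmm
      · have hd : GCDMonoid.gcd (a : K[X]) (b : K[X]) ≠ 0 := gcd_ne_zero_of_right hB
        have hda : (a : K[X]) = GCDMonoid.gcd (a : K[X]) (b : K[X]) *
            ((a : K[X]) / GCDMonoid.gcd (a : K[X]) (b : K[X])) :=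
          (EuclideanDomain.mul_div_cancel' hd (gcd_dvd_left _ _)).symm
        have hdb : (b : K[X]) = GCDMonoid.gcd (a : K[X]) (b : K[X]) *
            ((b : K[X]) / GCDMonoid.gcd (a : K[X]) (b : K[X])) :=
          (EuclideanDomain.mul_div_cancel' hd (gcd_dvd_right _ _)).symm
        have hcop : IsCoprime ((a : K[X]) / GCDMonoid.gcd (a : K[X]) (b : K[X]))
            ((b : K[X]) / GCDMonoid.gcd (a : K[X]) (b : K[X])) :=
          isCoprime_div_gcd_div_gcd hB
        have hor : ((a : K[X]) / GCDMonoid.gcd (a : K[X]) (b : K[X])).coeff 0 ≠ 0 ∨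
            ((b : K[X]) / GCDMonoid.gcd (a : K[X]) (b : K[X])).coeff 0 ≠ 0 := by
          by_contra hcon
          push_neg at hcon
          obtain ⟨h1, h2⟩ := hcon
          obtain ⟨u, v, huv⟩ := hcop
          have hx1 : (X : K[X]) ∣ 1 := by
            rw [← huv]
            exact dvd_add ((Polynomial.X_dvd_iff.mpr h1).mul_left u)
              ((Polynomial.X_dvd_iff.mpr h2).mul_left v)
          have hco := Polynomial.X_dvd_iff.mp hx1
          rw [Polynomial.coeff_one, if_pos rfl] at hco
          exact one_ne_zero hco
        rcases hor with ha0 | hb0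
        · exact conj2_main n hn hodd f hfodd hfn a b hB _ _ _ hd hda hdb hcop ha0
            hfIs hfmins
        · have hswap : (Ideal.span {b, a} :
              Ideal (Algebra.adjoin K {(X : K[X]) ^ 2, X ^ n})) = Ideal.span {a, b} :=
            Ideal.span_pair_comm
          have hfIss : ∀ y, y ∈ Ideal.span {b, a} → ∃ z, z ∈ Ideal.span {b, a} ∧
              (z : K[X]) = X ^ f * (y : K[X]) := by
            rw [hswap]; exact hfIs
          have hfminss : ∀ g, 0 < g → Odd g →
              (∀ y, y ∈ Ideal.span {b, a} → ∃ z, z ∈ Ideal.span {b, a} ∧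
                (z : K[X]) = X ^ g * (y : K[X])) → f ≤ g := by
            rw [hswap]; exact hfmins
          intro r
          rw [relFittingIdeal_comm]
          exact conj2_main n hn hodd f hfodd hfn b a hA _ _ _ hd hdb hda hcop.symm hb0
            hfIss hfminss r
  refine ⟨H1, ?_, ?_, ?_⟩
  · intro r
    rw [H2 r]
    exact rep2 hodd hfodd hfpos hfn
  · -- Statement 3
    have hevn1 : Even (n - 1) := by rcases hodd with ⟨l, hl⟩; exact ⟨l, by omega⟩
    have hevnf : Even (n - f) := by
      rcases hodd with ⟨l, hl⟩; rcases hfodd with ⟨o, ho⟩; exact ⟨l - o, by omega⟩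
    have hpow1 : (X : K[X]) ^ (n - 1) = X ^ (f - 1) * X ^ (n - f) := by
      rw [← pow_add]; congr 1; omega
    intro r
    constructor
    · intro hr g hg
      obtain ⟨p, q, hgpq⟩ := (H1 g).mp hg
      obtain ⟨hmr, hdvd⟩ := (H2 r).mp hr
      obtain ⟨p₀, q₀, hpq⟩ := (rep2 hodd hfodd hfpos hfn).mp ⟨hmr, hdvd⟩
      have hprodid : (p.comp (X ^ 2) + X ^ (f - 1) * q) * (r : K[X])
          = X ^ (n - f) * (p.comp (X ^ 2) * p₀.comp (X ^ 2))
            + X ^ (n - 1) * (p.comp (X ^ 2) * q₀ + q * p₀.comp (X ^ 2)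
              + X ^ (f - 1) * (q * q₀)) := by
        rw [hpq, hpow1]
        ring
      have hprodmr : MR n ((p.comp (X ^ 2) + X ^ (f - 1) * q) * (r : K[X])) := by
        rw [hprodid]
        apply MR.add
        · exact ((Ev.X_pow hevnf).mul ((ev_comp_X_sq p).mul (ev_comp_X_sq p₀))).mr n
        · exact MR_X_pow_mul hevn1 (by omega)
      refine ⟨⟨(p.comp (X ^ 2) + X ^ (f - 1) * q) * (r : K[X]), (hmem _).mpr hprodmr⟩, ?_⟩
      rw [hgpq, ← map_mul]
    · intro hall
      rw [H2 r]
      refine ⟨(hmem _).mp r.2, ?_⟩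
      have hMRk : ∀ k, MR n (X ^ k * (X ^ (f - 1) * (r : K[X]))) := by
        intro k
        have hgk := (H1 (algebraMap (Polynomial K) (RatFunc K)
          ((0 : K[X]).comp (X ^ 2) + X ^ (f - 1) * X ^ k))).mpr ⟨0, X ^ k, rfl⟩
        obtain ⟨s, hs⟩ := hall _ hgk
        have hps : ((0 : K[X]).comp (X ^ 2) + X ^ (f - 1) * X ^ k) * (r : K[X])
            = (s : K[X]) := halginj (by rw [map_mul]; exact hs)
        have heq : X ^ k * (X ^ (f - 1) * (r : K[X])) = (s : K[X]) := by
          rw [← hps, Polynomial.zero_comp]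
          ring
        rw [heq]
        exact (hmem _).mp s.2
      have hdvd1 : (X : K[X]) ^ (n - 1) ∣ X ^ (f - 1) * (r : K[X]) :=
        dvd_of_forall_MR (by omega) hMRk
      have hc : (X : K[X]) ^ (f - 1) * X ^ (n - f) ∣ X ^ (f - 1) * (r : K[X]) := by
        rw [← hpow1]
        exact hdvd1
      exact (mul_dvd_mul_iff_left (pow_ne_zero (f - 1) Polynomial.X_ne_zero)).mp hc
  · -- Statement 4 : ring isomorphism
    have h2m : 2 * ((n - f) / 2) = n - f := by
      rcases hodd with ⟨l, hl⟩; rcases hfodd with ⟨o, ho⟩; omega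
    have hodd_dvd : ∀ r : (Algebra.adjoin K {(X : K[X]) ^ 2, X ^ n}),
        (X : K[X]) ^ n ∣ ((r : K[X]) - evP (r : K[X])) := by
      intro r
      rw [Polynomial.X_pow_dvd_iff]
      intro i hi
      rw [coeff_sub_evP]
      split
      · exact (hmem _).mp r.2 i (by assumption) hi
      · rfl
    have hkey : ∀ r s : (Algebra.adjoin K {(X : K[X]) ^ 2, X ^ n}),
        (X : K[X]) ^ ((n - f) / 2) ∣ Polynomial.contract 2 ((r : K[X]) * (s : K[X]))
          - Polynomial.contract 2 (r : K[X]) * Polynomial.contract 2 (s : K[X]) := by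
      intro r s
      have hrest : (X : K[X]) ^ n ∣
          ((r : K[X]) * (s : K[X]) - evP (r : K[X]) * evP (s : K[X])) := by
        have e : (r : K[X]) * (s : K[X]) - evP (r : K[X]) * evP (s : K[X])
            = evP (r : K[X]) * ((s : K[X]) - evP (s : K[X]))
              + ((r : K[X]) - evP (r : K[X])) * (s : K[X]) := by ring
        rw [e]
        exact dvd_add ((hodd_dvd s).mul_left _) ((hodd_dvd r).mul_right _)
      have hee : evP (r : K[X]) * evP (s : K[X]) =
          Polynomial.expand K 2 (Polynomial.contract 2 (r : K[X]) *
            Polynomial.contract 2 (s : K[X])) := by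
        rw [map_mul]
        rfl
      have hsplit2 : Polynomial.contract 2 ((r : K[X]) * (s : K[X]))
          = Polynomial.contract 2 (r : K[X]) * Polynomial.contract 2 (s : K[X])
            + Polynomial.contract 2 ((r : K[X]) * (s : K[X])
              - evP (r : K[X]) * evP (s : K[X])) := by
        have e2 : (r : K[X]) * (s : K[X]) = (evP (r : K[X]) * evP (s : K[X]))
            + ((r : K[X]) * (s : K[X]) - evP (r : K[X]) * evP (s : K[X])) := by ring
        nth_rewrite 1 [e2]
        rw [CuspAux.contract_add, hee, Polynomial.contract_expand 2 (by norm_num)]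
      rw [hsplit2]
      have e3 : ∀ z : K[X], z = z - 0 := by intro z; ring
      have : Polynomial.contract 2 (r : K[X]) * Polynomial.contract 2 (s : K[X])
          + Polynomial.contract 2 ((r : K[X]) * (s : K[X])
            - evP (r : K[X]) * evP (s : K[X]))
          - Polynomial.contract 2 (r : K[X]) * Polynomial.contract 2 (s : K[X])
          = Polynomial.contract 2 ((r : K[X]) * (s : K[X])
            - evP (r : K[X]) * evP (s : K[X])) := by ring
      rw [this]
      rw [Polynomial.X_pow_dvd_iff]
      intro i hi
      rw [coeff_contract (by norm_num)]
      obtain ⟨w', hw'⟩ := hrest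
      rw [hw']
      exact coeff_X_pow_mul_lt (by omega)
    refine ⟨?_⟩
    let φ : (Algebra.adjoin K {(X : K[X]) ^ 2, X ^ n}) →+*
        (Polynomial K ⧸ Ideal.span {(X : K[X]) ^ ((n - f) / 2)}) :=
      { toFun := fun r => Ideal.Quotient.mk _ (Polynomial.contract 2 (r : K[X])),
        map_one' := by
          rw [show ((1 : (Algebra.adjoin K {(X : K[X]) ^ 2, X ^ n})) : K[X]) = 1 from rfl,
            CuspAux.contract_one, map_one],
        map_mul' := by
          intro r s
          rw [show (((r * s : (Algebra.adjoin K {(X : K[X]) ^ 2, X ^ n}))) : K[X])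
            = (r : K[X]) * (s : K[X]) from rfl]
          rw [← map_mul (Ideal.Quotient.mk (Ideal.span {(X : K[X]) ^ ((n - f) / 2)}))]
          rw [Ideal.Quotient.eq, Ideal.mem_span_singleton]
          exact hkey r s,
        map_zero' := by
          rw [show ((0 : (Algebra.adjoin K {(X : K[X]) ^ 2, X ^ n})) : K[X]) = 0 from rfl,
            contract_zero, map_zero],
        map_add' := by
          intro r s
          rw [show (((r + s : (Algebra.adjoin K {(X : K[X]) ^ 2, X ^ n}))) : K[X])
            = (r : K[X]) + (s : K[X]) from rfl, CuspAux.contract_add, map_add] }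
    have hker : RingHom.ker φ = relFittingIdeal a b := by
      ext r
      rw [RingHom.mem_ker]
      have hφ : φ r = Ideal.Quotient.mk _ (Polynomial.contract 2 (r : K[X])) := rfl
      rw [hφ, Ideal.Quotient.eq_zero_iff_mem, Ideal.mem_span_singleton, H2 r]
      constructor
      · intro hdv
        refine ⟨(hmem _).mp r.2, ?_⟩
        rw [Polynomial.X_pow_dvd_iff]
        intro i hi
        rcases Nat.even_or_odd i with ⟨t, ht⟩ | hio
        · have h5 := Polynomial.X_pow_dvd_iff.mp hdv t (by omega)
          rw [coeff_contract (by norm_num)] at h5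
          rw [show i = t * 2 by omega]
          exact h5
        · exact (hmem _).mp r.2 i hio (by omega)
      · rintro ⟨hmr, hdv⟩
        rw [Polynomial.X_pow_dvd_iff]
        intro i hi
        rw [coeff_contract (by norm_num)]
        exact Polynomial.X_pow_dvd_iff.mp hdv (i * 2) (by omega)
    have hsurj : Function.Surjective φ := by
      intro x
      obtain ⟨q, rfl⟩ := Ideal.Quotient.mk_surjective x
      refine ⟨⟨Polynomial.expand K 2 q, (hmem _).mpr ((Ev.expand q).mr n)⟩, ?_⟩
      have hφ : φ ⟨Polynomial.expand K 2 q, (hmem _).mpr ((Ev.expand q).mr n)⟩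
          = Ideal.Quotient.mk _ (Polynomial.contract 2 (Polynomial.expand K 2 q)) := rfl
      rw [hφ, Polynomial.contract_expand 2 (by norm_num)]
    exact (Ideal.quotEquivOfEq hker.symm).trans (RingHom.quotientKerEquivOfSurjective hsurj)
end
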